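/- arXiv:2603.20761 — 4 statements merged into one kernel-verified Lean document; each statement's English description precedes it below -/
import Mathlib

section
/- Let V be an isometry defining an irreducible quantum Markov chain with system dimension d and environment dimension k, and let S := { c ∈ ℂ : there exists a unitary d×d matrix W with (W ⊗ 1_k) V = c · V W }. Then: (a) every c ∈ S has |c| = 1, and if (W ⊗ 1_k)V = cVW then T_V(W) = cW; (b) S is exactly the set of eigenvalues of modulus one of the linear map T_V on d×d complex matrices; (c) S is a finite subgroup of the unit circle; (d) for every c ∈ S, the associated unitary is unique up to a phase: if W and W' are unitary with (W ⊗ 1_k)V = cVW and (W' ⊗ 1_k)V = cVW', then W' = e^{iθ} W for some θ ∈ ℝ. (Equivalently, the stabiliser of V under the gauge action (c,W)·V := c̄ (W ⊗ 1_k) V Wᴴ of U(1)×PU(d) is a finite cyclic group.) -/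
open Matrix Filter
open scoped Kronecker ComplexConjugate ComplexOrder

noncomputable section

namespace QMCPaper

/-- The `j`-th block (Kraus operator style) of a `(d₁·k)×d₂` matrix. -/
def blk {d₁ d₂ k : ℕ} (V : Matrix (Fin d₁ × Fin k) (Fin d₂) ℂ) (j : Fin k) :
    Matrix (Fin d₁) (Fin d₂) ℂ :=
  fun a b => V (a, j) b

/-- The Kraus operators of a QMC isometry. -/
def kraus {d k : ℕ} (V : Matrix (Fin d × Fin k) (Fin d) ℂ) (j : Fin k) :
    Matrix (Fin d) (Fin d) ℂ :=
  blk V j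

/-- The transition channel `T_V(X) = Vᴴ (X ⊗ 1_k) V = Σ_j K_jᴴ X K_j`. -/
def chan {d k : ℕ} (V : Matrix (Fin d × Fin k) (Fin d) ℂ)
    (X : Matrix (Fin d) (Fin d) ℂ) : Matrix (Fin d) (Fin d) ℂ :=
  ∑ j : Fin k, (kraus V j)ᴴ * X * kraus V j

/-- The predual channel `T_{V*}(ρ) = Σ_j K_j ρ K_jᴴ`. -/
def predual {d k : ℕ} (V : Matrix (Fin d × Fin k) (Fin d) ℂ)
    (ρ : Matrix (Fin d) (Fin d) ℂ) : Matrix (Fin d) (Fin d) ℂ :=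
  ∑ j : Fin k, kraus V j * ρ * (kraus V j)ᴴ

/-- A state: positive semidefinite matrix of trace one. -/
def IsState {d : ℕ} (ρ : Matrix (Fin d) (Fin d) ℂ) : Prop :=
  ρ.PosSemidef ∧ ρ.trace = 1

/-- `V` is an isometry defining an irreducible QMC with (unique, faithful) stationary
state `ρss`. -/
def IsIrreducible {d k : ℕ} (V : Matrix (Fin d × Fin k) (Fin d) ℂ)
    (ρss : Matrix (Fin d) (Fin d) ℂ) : Prop :=
  Vᴴ * V = 1 ∧ IsState ρss ∧ predual V ρss = ρss ∧ ρss.PosDef ∧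
    ∀ ρ, IsState ρ → predual V ρ = ρ → ρ = ρss

/-- For a word `i = (i_0, …, i_{n-1})`, the operator `K_i = K_{i_{n-1}} ⋯ K_{i_0}`. -/
def krausWord {d k : ℕ} (V : Matrix (Fin d × Fin k) (Fin d) ℂ) {n : ℕ}
    (i : Fin n → Fin k) : Matrix (Fin d) (Fin d) ℂ :=
  ((List.ofFn i).reverse.map (kraus V)).prod

/-- The output state at time `n` with initial system state `ρ`:
its `(i,j)` entry is `tr(K_i ρ K_jᴴ)`. -/
def outState {d k : ℕ} (V : Matrix (Fin d × Fin k) (Fin d) ℂ)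
    (ρ : Matrix (Fin d) (Fin d) ℂ) (n : ℕ) :
    Matrix (Fin n → Fin k) (Fin n → Fin k) ℂ :=
  fun i j => (krausWord V i * ρ * (krausWord V j)ᴴ).trace

/-- Output equivalence (with given initial states): equality of all output states. -/
def OutputEquiv {d₁ d₂ k : ℕ}
    (V₁ : Matrix (Fin d₁ × Fin k) (Fin d₁) ℂ) (ρ₁ : Matrix (Fin d₁) (Fin d₁) ℂ)
    (V₂ : Matrix (Fin d₂ × Fin k) (Fin d₂) ℂ) (ρ₂ : Matrix (Fin d₂) (Fin d₂) ℂ) : Prop :=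
  ∀ n : ℕ, 1 ≤ n → ∀ i j : Fin n → Fin k,
    (krausWord V₁ i * ρ₁ * (krausWord V₁ j)ᴴ).trace =
      (krausWord V₂ i * ρ₂ * (krausWord V₂ j)ᴴ).trace

/-- A (possibly rectangular) unitary matrix. -/
def IsUnitaryMat {d₁ d₂ : ℕ} (W : Matrix (Fin d₁) (Fin d₂) ℂ) : Prop :=
  Wᴴ * W = 1 ∧ W * Wᴴ = 1

end QMCPaper

namespace QMCPaper

/-- The set of phases `c` for which some unitary `W` intertwines `V` with itself:
`(W ⊗ 1_k) V = c · V W`. -/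
def gaugeSet {d k : ℕ} (V : Matrix (Fin d × Fin k) (Fin d) ℂ) : Set ℂ :=
  {c : ℂ | ∃ W : Matrix (Fin d) (Fin d) ℂ, IsUnitaryMat W ∧
    (W ⊗ₖ (1 : Matrix (Fin k) (Fin k) ℂ)) * V = c • (V * W)}

variable {d k : ℕ}

lemma blk_mul_right (A : Matrix (Fin d × Fin k) (Fin d) ℂ) (M : Matrix (Fin d) (Fin d) ℂ) (j : Fin k) :
    blk (A * M) j = blk A j * M := by
  ext a b; simp [blk, Matrix.mul_apply]

lemma blk_kron_mul (X : Matrix (Fin d) (Fin d) ℂ) (V : Matrix (Fin d × Fin k) (Fin d) ℂ) (j : Fin k) :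
    blk ((X ⊗ₖ (1 : Matrix (Fin k) (Fin k) ℂ)) * V) j = X * blk V j := by
  ext a b
  simp [blk, Matrix.mul_apply, Fintype.sum_prod_type, Matrix.one_apply, mul_comm]

lemma conjTranspose_mul_eq_sum (A B : Matrix (Fin d × Fin k) (Fin d) ℂ) :
    Aᴴ * B = ∑ j, (blk A j)ᴴ * blk B j := by
  ext b b'
  simp only [Matrix.mul_apply, Matrix.sum_apply, blk, Matrix.conjTranspose_apply,
    Fintype.sum_prod_type]
  rw [Finset.sum_comm]

lemma chan_eq (V : Matrix (Fin d × Fin k) (Fin d) ℂ) (X : Matrix (Fin d) (Fin d) ℂ) :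
    chan V X = Vᴴ * ((X ⊗ₖ (1 : Matrix (Fin k) (Fin k) ℂ)) * V) := by
  rw [conjTranspose_mul_eq_sum]
  unfold chan kraus
  congr 1; ext j
  rw [blk_kron_mul, Matrix.mul_assoc]

lemma kron_one_conjTranspose (X : Matrix (Fin d) (Fin d) ℂ) :
    (X ⊗ₖ (1 : Matrix (Fin k) (Fin k) ℂ))ᴴ = Xᴴ ⊗ₖ (1 : Matrix (Fin k) (Fin k) ℂ) := by
  ext ⟨a, j⟩ ⟨a', j'⟩
  simp [Matrix.conjTranspose_apply, Matrix.one_apply, eq_comm]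
  by_cases hh : j = j' <;> simp [hh]

lemma psd_sqrt_exists {Y : Matrix (Fin d) (Fin d) ℂ} (hY : Y.PosSemidef) :
    ∃ B : Matrix (Fin d) (Fin d) ℂ, B * B = Y ∧ Bᴴ = B := by
  open scoped MatrixOrder in
  exact ⟨CFC.sqrt Y, CFC.sqrt_mul_sqrt_self Y hY.nonneg, (CFC.sqrt_nonneg Y).posSemidef.1⟩

lemma psd_eq_conjTranspose_mul_self {Y : Matrix (Fin d) (Fin d) ℂ} (hY : Y.PosSemidef) :
    ∃ B : Matrix (Fin d) (Fin d) ℂ, Y = Bᴴ * B := by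
  obtain ⟨B, hBB, hBH⟩ := psd_sqrt_exists hY
  exact ⟨B, by rw [hBH, hBB]⟩

lemma trace_zero_of_psd {Y : Matrix (Fin d) (Fin d) ℂ} (hY : Y.PosSemidef) (h : Y.trace = 0) :
    Y = 0 := by
  obtain ⟨B, rfl⟩ := psd_eq_conjTranspose_mul_self hY
  rw [Matrix.conjTranspose_mul_self_eq_zero]
  have h2 : ∑ j : Fin d, ∑ i : Fin d, Complex.normSq (B i j) = 0 := by
    have := congrArg Complex.re h
    simpa [Matrix.trace, Matrix.diag, Matrix.mul_apply, Complex.normSq_apply,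
      Matrix.conjTranspose_apply, Complex.mul_re] using this
  ext i j
  have h3 : ∀ j ∈ Finset.univ, ∀ i ∈ Finset.univ, (0:ℝ) ≤ Complex.normSq (B i j) := by
    intro _ _ _ _; exact Complex.normSq_nonneg _
  have := (Finset.sum_eq_zero_iff_of_nonneg (fun j _ => Finset.sum_nonneg (h3 j (Finset.mem_univ j)))).1 h2
  have := (Finset.sum_eq_zero_iff_of_nonneg (h3 j (Finset.mem_univ j))).1 (this j (Finset.mem_univ j))
  have := this i (Finset.mem_univ i)
  simpa [Complex.normSq_eq_zero] using this

lemma eq_zero_of_sandwich {ρ A : Matrix (Fin d) (Fin d) ℂ} (hρ : ρ.PosDef)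
    (h : A * ρ * Aᴴ = 0) : A = 0 := by
  rw [← Matrix.conjTranspose_eq_zero]
  ext i j
  have hv : ∀ v : Fin d → ℂ, Aᴴ *ᵥ v = 0 := by
    intro v
    by_contra hne
    have hpos := hρ.dotProduct_mulVec_pos hne
    have : star (Aᴴ *ᵥ v) ⬝ᵥ ρ *ᵥ (Aᴴ *ᵥ v) = 0 := by
      have : star v ⬝ᵥ (A * ρ * Aᴴ) *ᵥ v = 0 := by rw [h]; simp
      rw [← Matrix.mulVec_mulVec, ← Matrix.mulVec_mulVec, Matrix.dotProduct_mulVec (star v)] at this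
      rw [Matrix.star_mulVec, Matrix.conjTranspose_conjTranspose]
      exact this
    rw [this] at hpos
    exact lt_irrefl 0 hpos
  have := congrFun (hv (Pi.single j 1)) i
  simpa [Matrix.mulVec_single] using this

-- trace of psd sandwich by posdef zero => zero
lemma psd_trace_posdef {ρ Y : Matrix (Fin d) (Fin d) ℂ} (hρ : ρ.PosDef) (hY : Y.PosSemidef)
    (h : (ρ * Y).trace = 0) : Y = 0 := by
  obtain ⟨B, hBB, hBH⟩ := psd_sqrt_exists hY
  have h1 : (B * ρ * Bᴴ).trace = 0 := by
    rw [hBH]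
    calc (B * ρ * B).trace = (B * B * ρ).trace := by
          rw [Matrix.trace_mul_cycle]
      _ = (ρ * Y).trace := by rw [hBB, Matrix.trace_mul_comm]
      _ = 0 := h
  have hpsd : (B * ρ * Bᴴ).PosSemidef := hρ.posSemidef.mul_mul_conjTranspose_same B
  have := trace_zero_of_psd hpsd h1
  have hB0 : B = 0 := eq_zero_of_sandwich hρ this
  rw [← hBB, hB0, Matrix.mul_zero]

-- stationarity duality
lemma trace_chan {V : Matrix (Fin d × Fin k) (Fin d) ℂ} {ρss : Matrix (Fin d) (Fin d) ℂ}
    (hst : predual V ρss = ρss) (Y : Matrix (Fin d) (Fin d) ℂ) :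
    (ρss * chan V Y).trace = (ρss * Y).trace := by
  conv_rhs => rw [← hst]
  unfold chan predual
  rw [Matrix.mul_sum, Matrix.sum_mul, Matrix.trace_sum, Matrix.trace_sum]
  congr 1; ext j
  rw [show kraus V j * ρss * (kraus V j)ᴴ * Y = kraus V j * ρss * ((kraus V j)ᴴ * Y) by
        rw [Matrix.mul_assoc]]
  rw [Matrix.trace_mul_cycle]
  rw [Matrix.trace_mul_comm]


lemma ks_core (V A : Matrix (Fin d × Fin k) (Fin d) ℂ) (hV : Vᴴ * V = 1) :
    (A - V * (Vᴴ * A))ᴴ * (A - V * (Vᴴ * A)) = Aᴴ * A - (Vᴴ * A)ᴴ * (Vᴴ * A) := by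
  have h1 : Vᴴ * (V * (Vᴴ * A)) = Vᴴ * A := by
    rw [← Matrix.mul_assoc, hV, Matrix.one_mul]
  simp only [Matrix.conjTranspose_sub, Matrix.conjTranspose_mul, Matrix.sub_mul, Matrix.mul_sub,
    Matrix.conjTranspose_conjTranspose, Matrix.mul_assoc]
  rw [h1]
  abel

lemma eig_rel {V : Matrix (Fin d × Fin k) (Fin d) ℂ} {ρss : Matrix (Fin d) (Fin d) ℂ}
    (h : IsIrreducible V ρss) {c : ℂ} {X : Matrix (Fin d) (Fin d) ℂ}
    (hc : (starRingEnd ℂ) c * c = 1) (hX : chan V X = c • X) :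
    chan V (Xᴴ * X) = Xᴴ * X ∧
      (X ⊗ₖ (1 : Matrix (Fin k) (Fin k) ℂ)) * V = c • (V * X) := by
  obtain ⟨hV, hρstate, hstat, hρpd, huniq⟩ := h
  set A := (X ⊗ₖ (1 : Matrix (Fin k) (Fin k) ℂ)) * V with hA
  have hchan : chan V X = Vᴴ * A := chan_eq V X
  have hAA : Aᴴ * A = chan V (Xᴴ * X) := by
    rw [chan_eq, hA, Matrix.conjTranspose_mul, kron_one_conjTranspose]
    rw [Matrix.mul_assoc, ← Matrix.mul_assoc (Xᴴ ⊗ₖ (1 : Matrix (Fin k) (Fin k) ℂ)),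
      ← Matrix.mul_kronecker_mul, Matrix.one_mul]
  have hXX : (chan V X)ᴴ * chan V X = Xᴴ * X := by
    have hc' : star c * c = 1 := hc
    rw [hX, Matrix.conjTranspose_smul, Matrix.smul_mul, Matrix.mul_smul, smul_smul, hc', one_smul]
  have hkey : (A - V * (Vᴴ * A))ᴴ * (A - V * (Vᴴ * A)) = chan V (Xᴴ * X) - Xᴴ * X := by
    rw [ks_core V A hV, hAA, ← hXX, hchan]
  have hpsd : (chan V (Xᴴ * X) - Xᴴ * X).PosSemidef := by
    rw [← hkey]; exact Matrix.posSemidef_conjTranspose_mul_self _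
  have htr : (ρss * (chan V (Xᴴ * X) - Xᴴ * X)).trace = 0 := by
    rw [Matrix.mul_sub, Matrix.trace_sub, trace_chan hstat, sub_self]
  have hzero := psd_trace_posdef hρpd hpsd htr
  have hfix : chan V (Xᴴ * X) = Xᴴ * X := by
    have := sub_eq_zero.1 hzero; exact this
  refine ⟨hfix, ?_⟩
  have hE : A - V * (Vᴴ * A) = 0 := by
    rw [← Matrix.conjTranspose_mul_self_eq_zero, hkey, hfix, sub_self]
  have : A = V * (Vᴴ * A) := by
    have := sub_eq_zero.1 hE; exact this
  rw [hA] at this ⊢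
  rw [this, ← hchan, hX, Matrix.mul_smul]

lemma psd_trace_real {Y : Matrix (Fin d) (Fin d) ℂ} (hY : Y.PosSemidef) :
    ∃ r : ℝ, 0 ≤ r ∧ Y.trace = (r : ℂ) := by
  obtain ⟨B, rfl⟩ := psd_eq_conjTranspose_mul_self hY
  refine ⟨∑ j : Fin d, ∑ i : Fin d, Complex.normSq (B i j), ?_, ?_⟩
  · exact Finset.sum_nonneg fun j _ => Finset.sum_nonneg fun i _ => Complex.normSq_nonneg _
  · rw [Matrix.trace]
    push_cast
    congr 1; ext j
    rw [Matrix.diag_apply, Matrix.mul_apply]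
    congr 1; ext i
    rw [Matrix.conjTranspose_apply]
    exact (Complex.normSq_eq_conj_mul_self).symm ▸ rfl

lemma psd_real_smul {Y : Matrix (Fin d) (Fin d) ℂ} (hY : Y.PosSemidef) {r : ℝ} (hr : 0 ≤ r) :
    ((r : ℂ) • Y).PosSemidef := by
  constructor
  · show ((r : ℂ) • Y)ᴴ = (r : ℂ) • Y
    rw [Matrix.conjTranspose_smul, hY.1, show star (r:ℂ) = (r:ℂ) from Complex.conj_ofReal r]
  · exact (hY.smul (Complex.zero_le_real.2 hr)).2

lemma scalar_of_commute {V : Matrix (Fin d × Fin k) (Fin d) ℂ} {ρss : Matrix (Fin d) (Fin d) ℂ}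
    (h : IsIrreducible V ρss) (hd : 0 < d) {Z : Matrix (Fin d) (Fin d) ℂ}
    (hcom : ∀ j, Z * kraus V j = kraus V j * Z)
    (hcom' : ∀ j, Zᴴ * kraus V j = kraus V j * Zᴴ) :
    ∃ μ : ℂ, Z = μ • 1 := by
  obtain ⟨hV, hρstate, hstat, hρpd, huniq⟩ := h
  haveI : Nonempty (Fin d) := ⟨⟨0, hd⟩⟩
  obtain ⟨μ, hμ⟩ := Module.End.exists_eigenvalue (Matrix.mulVecLin Z : Module.End ℂ (Fin d → ℂ))
  obtain ⟨v, hv⟩ := hμ.exists_hasEigenvector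
  refine ⟨μ, ?_⟩
  set N : Matrix (Fin d) (Fin d) ℂ := Z - μ • 1 with hNdef
  have hNv : N *ᵥ v = 0 := by
    have hZv : Z *ᵥ v = μ • v := by
      simpa [Matrix.mulVecLin_apply] using hv.apply_eq_smul
    rw [hNdef, Matrix.sub_mulVec, hZv, Matrix.smul_mulVec, Matrix.one_mulVec, sub_self]
  have hNcom : ∀ j, N * kraus V j = kraus V j * N := by
    intro j
    simp only [hNdef, Matrix.sub_mul, Matrix.mul_sub, hcom j, Matrix.smul_mul, Matrix.mul_smul,
      Matrix.one_mul, Matrix.mul_one]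
  have hNHcom : ∀ j, Nᴴ * kraus V j = kraus V j * Nᴴ := by
    intro j
    have : Nᴴ = Zᴴ - (starRingEnd ℂ) μ • 1 := by
      rw [hNdef, Matrix.conjTranspose_sub, Matrix.conjTranspose_smul, Matrix.conjTranspose_one]
      rfl
    simp only [this, Matrix.sub_mul, Matrix.mul_sub, hcom' j, Matrix.smul_mul, Matrix.mul_smul,
      Matrix.one_mul, Matrix.mul_one]
  set Y : Matrix (Fin d) (Fin d) ℂ := Nᴴ * N with hYdef
  have hYH : Yᴴ = Y := (Matrix.posSemidef_conjTranspose_mul_self N).1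
  have hYcom : ∀ j, Y * kraus V j = kraus V j * Y := by
    intro j
    rw [hYdef, Matrix.mul_assoc, hNcom j, ← Matrix.mul_assoc, hNHcom j, Matrix.mul_assoc]
  have hYcomH : ∀ j, Y * (kraus V j)ᴴ = (kraus V j)ᴴ * Y := by
    intro j
    have := congrArg Matrix.conjTranspose (hYcom j)
    simpa [Matrix.conjTranspose_mul, hYH] using this.symm
  have hYv : Y *ᵥ v = 0 := by
    rw [hYdef, ← Matrix.mulVec_mulVec, hNv, Matrix.mulVec_zero]
  set σ : Matrix (Fin d) (Fin d) ℂ := Y * ρss * Y with hσdef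
  have hσpsd : σ.PosSemidef := by
    have := hρpd.posSemidef.mul_mul_conjTranspose_same Y
    rwa [hYH] at this
  have hσst : predual V σ = σ := by
    unfold predual
    have hterm : ∀ j, kraus V j * σ * (kraus V j)ᴴ
        = Y * (kraus V j * ρss * (kraus V j)ᴴ) * Y := by
      intro j
      simp only [hσdef, Matrix.mul_assoc]
      rw [hYcomH j]
      rw [← Matrix.mul_assoc (kraus V j) Y, ← hYcom j, Matrix.mul_assoc]
    calc ∑ j, kraus V j * σ * (kraus V j)ᴴ
        = ∑ j, Y * (kraus V j * ρss * (kraus V j)ᴴ) * Y := by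
          exact Finset.sum_congr rfl fun j _ => hterm j
      _ = Y * (∑ j, kraus V j * ρss * (kraus V j)ᴴ) * Y := by
          rw [Matrix.mul_sum, Matrix.sum_mul]
      _ = Y * ρss * Y := by rw [show (∑ j, kraus V j * ρss * (kraus V j)ᴴ) = ρss from hstat]
      _ = σ := hσdef.symm
  have hY0 : Y = 0 := by
    by_cases ht : σ.trace = 0
    · have hσ0 : σ = 0 := trace_zero_of_psd hσpsd ht
      have : Y * ρss * Yᴴ = 0 := by rw [hYH]; exact hσ0
      exact eq_zero_of_sandwich hρpd this
    · exfalso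
      obtain ⟨r, hr0, hrtr⟩ := psd_trace_real hσpsd
      have hrne : r ≠ 0 := by
        intro h0; apply ht; rw [hrtr, h0]; simp
      have hstate : IsState ((r⁻¹ : ℂ) • σ) := by
        constructor
        · exact_mod_cast psd_real_smul hσpsd (inv_nonneg.2 hr0)
        · rw [Matrix.trace_smul, hrtr, smul_eq_mul]
          norm_cast
          rw [inv_mul_cancel₀ hrne]
      have hstσ : predual V ((r⁻¹ : ℂ) • σ) = (r⁻¹ : ℂ) • σ := by
        unfold predual
        simp only [Matrix.smul_mul, Matrix.mul_smul, ← Finset.smul_sum]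
        rw [show (∑ j, kraus V j * σ * (kraus V j)ᴴ) = σ from hσst]
      have heq := huniq _ hstate hstσ
      have hform : star v ⬝ᵥ ρss *ᵥ v = 0 := by
        rw [← heq]
        rw [Matrix.smul_mulVec]
        have hσv : σ *ᵥ v = 0 := by
          rw [hσdef, ← Matrix.mulVec_mulVec, ← Matrix.mulVec_mulVec, hYv, Matrix.mulVec_zero,
            Matrix.mulVec_zero]
        rw [hσv, smul_zero, dotProduct_zero]
      have := hρpd.dotProduct_mulVec_pos hv.2
      rw [hform] at this
      exact lt_irrefl 0 this
  have hN0 : N = 0 := by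
    rw [← Matrix.conjTranspose_mul_self_eq_zero]; exact hY0
  have := sub_eq_zero.1 hN0
  exact this

def chanLin (V : Matrix (Fin d × Fin k) (Fin d) ℂ) :
    Module.End ℂ (Matrix (Fin d) (Fin d) ℂ) where
  toFun := chan V
  map_add' X Y := by
    simp [chan, Matrix.mul_add, Matrix.add_mul, Finset.sum_add_distrib]
  map_smul' t X := by
    simp [chan, Matrix.mul_smul, Matrix.smul_mul, Finset.smul_sum]

lemma eig_finite (V : Matrix (Fin d × Fin k) (Fin d) ℂ) :
    {c : ℂ | ∃ X : Matrix (Fin d) (Fin d) ℂ, X ≠ 0 ∧ chan V X = c • X}.Finite := by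
  apply Set.Finite.subset (Module.End.finite_hasEigenvalue (chanLin V))
  rintro c ⟨X, hX0, hX⟩
  exact Module.End.hasEigenvalue_of_hasEigenvector
    ⟨(Module.End.mem_eigenspace_iff).2 hX, hX0⟩

lemma chan_conjTranspose (V : Matrix (Fin d × Fin k) (Fin d) ℂ) (X : Matrix (Fin d) (Fin d) ℂ) :
    chan V Xᴴ = (chan V X)ᴴ := by
  unfold chan
  rw [Matrix.conjTranspose_sum]
  congr 1; ext j
  rw [Matrix.conjTranspose_mul, Matrix.conjTranspose_mul, Matrix.conjTranspose_conjTranspose,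
    Matrix.mul_assoc]

lemma conj_mul_eq_one_iff {c : ℂ} : (starRingEnd ℂ) c * c = 1 ↔ ‖c‖ = 1 := by
  rw [← Complex.normSq_eq_conj_mul_self]
  constructor
  · intro h1
    have h2 : Complex.normSq c = 1 := by exact_mod_cast h1
    have h3 := Complex.sq_norm c
    nlinarith [norm_nonneg c]
  · intro h1
    have h2 : Complex.normSq c = 1 := by rw [← Complex.sq_norm, h1]; ring
    exact_mod_cast h2

variable {d k : ℕ}

lemma pos_of_irreducible {V : Matrix (Fin d × Fin k) (Fin d) ℂ} {ρss : Matrix (Fin d) (Fin d) ℂ}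
    (h : IsIrreducible V ρss) : 0 < d := by
  rcases Nat.eq_zero_or_pos d with h0 | h0
  · exfalso
    have h1 := h.2.1.2
    subst h0
    rw [Matrix.trace_eq_zero_of_isEmpty] at h1
    exact zero_ne_one h1
  · exact h0

lemma scalar_of_intertwine {V : Matrix (Fin d × Fin k) (Fin d) ℂ} {ρss : Matrix (Fin d) (Fin d) ℂ}
    (h : IsIrreducible V ρss) (hd : 0 < d) {U : Matrix (Fin d) (Fin d) ℂ}
    (h1 : (U ⊗ₖ (1 : Matrix (Fin k) (Fin k) ℂ)) * V = V * U)
    (h2 : (Uᴴ ⊗ₖ (1 : Matrix (Fin k) (Fin k) ℂ)) * V = V * Uᴴ) :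
    ∃ μ : ℂ, U = μ • 1 := by
  apply scalar_of_commute h hd
  · intro j
    have := congrArg (fun M => blk M j) h1
    simpa [blk_kron_mul, blk_mul_right, kraus] using this
  · intro j
    have := congrArg (fun M => blk M j) h2
    simpa [blk_kron_mul, blk_mul_right, kraus] using this

lemma fixed_point_scalar {V : Matrix (Fin d × Fin k) (Fin d) ℂ} {ρss : Matrix (Fin d) (Fin d) ℂ}
    (h : IsIrreducible V ρss) (hd : 0 < d) {Z : Matrix (Fin d) (Fin d) ℂ}
    (hZH : Zᴴ = Z) (hZfix : chan V Z = Z) : ∃ μ : ℂ, Z = μ • 1 := by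
  have h1 : chan V Z = (1 : ℂ) • Z := by rw [one_smul]; exact hZfix
  have hrelZ := (eig_rel h (by simp) h1).2
  rw [one_smul] at hrelZ
  have h2 : (Zᴴ ⊗ₖ (1 : Matrix (Fin k) (Fin k) ℂ)) * V = V * Zᴴ := by rw [hZH]; exact hrelZ
  exact scalar_of_intertwine h hd hrelZ h2

lemma rel_inv {V : Matrix (Fin d × Fin k) (Fin d) ℂ} {c : ℂ}
    {W : Matrix (Fin d) (Fin d) ℂ} (hcne : c ≠ 0) (hW : IsUnitaryMat W)
    (hrel : (W ⊗ₖ (1 : Matrix (Fin k) (Fin k) ℂ)) * V = c • (V * W)) :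
    (Wᴴ ⊗ₖ (1 : Matrix (Fin k) (Fin k) ℂ)) * V = c⁻¹ • (V * Wᴴ) := by
  have hstep : V * Wᴴ = c • ((Wᴴ ⊗ₖ (1 : Matrix (Fin k) (Fin k) ℂ)) * V) := by
    have h1 : (Wᴴ ⊗ₖ (1 : Matrix (Fin k) (Fin k) ℂ)) * ((W ⊗ₖ (1 : Matrix (Fin k) (Fin k) ℂ)) * V) = V := by
      rw [← Matrix.mul_assoc, ← Matrix.mul_kronecker_mul, hW.1, Matrix.one_mul,
        Matrix.one_kronecker_one, Matrix.one_mul]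
    rw [hrel, Matrix.mul_smul] at h1
    calc V * Wᴴ = (c • ((Wᴴ ⊗ₖ (1 : Matrix (Fin k) (Fin k) ℂ)) * (V * W))) * Wᴴ := by rw [h1]
      _ = c • ((Wᴴ ⊗ₖ (1 : Matrix (Fin k) (Fin k) ℂ)) * V) := by
          rw [Matrix.smul_mul, Matrix.mul_assoc, Matrix.mul_assoc, hW.2, Matrix.mul_one]
  rw [hstep, smul_smul, inv_mul_cancel₀ hcne, one_smul]

/-- Theorem: the stabiliser of an irreducible QMC. -/
theorem stabiliser_structure {d k : ℕ}
    (V : Matrix (Fin d × Fin k) (Fin d) ℂ) (ρss : Matrix (Fin d) (Fin d) ℂ)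
    (h : IsIrreducible V ρss) :
    -- (a) every `c` in the set has modulus one, and the intertwining relation forces
    -- `T_V(W) = c W`
    (∀ c ∈ gaugeSet V, ‖c‖ = 1) ∧
    (∀ (c : ℂ) (W : Matrix (Fin d) (Fin d) ℂ), IsUnitaryMat W →
      (W ⊗ₖ (1 : Matrix (Fin k) (Fin k) ℂ)) * V = c • (V * W) →
      chan V W = c • W) ∧
    -- (b) the set is exactly the set of peripheral eigenvalues of `T_V`
    (gaugeSet V = {c : ℂ | ‖c‖ = 1 ∧
      ∃ X : Matrix (Fin d) (Fin d) ℂ, X ≠ 0 ∧ chan V X = c • X}) ∧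
    -- (c) it is a finite subgroup of the unit circle
    (gaugeSet V).Finite ∧ (1 : ℂ) ∈ gaugeSet V ∧
    (∀ c ∈ gaugeSet V, ∀ c' ∈ gaugeSet V, c * c' ∈ gaugeSet V) ∧
    (∀ c ∈ gaugeSet V, c⁻¹ ∈ gaugeSet V) ∧
    -- (d) for every `c`, the associated unitary is unique up to a phase
    (∀ (c : ℂ) (W W' : Matrix (Fin d) (Fin d) ℂ),
      IsUnitaryMat W → IsUnitaryMat W' →
      (W ⊗ₖ (1 : Matrix (Fin k) (Fin k) ℂ)) * V = c • (V * W) →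
      (W' ⊗ₖ (1 : Matrix (Fin k) (Fin k) ℂ)) * V = c • (V * W') →
      ∃ θ : ℝ, W' = Complex.exp (θ * Complex.I) • W) := by
  have hV := h.1
  have hd : 0 < d := pos_of_irreducible h
  -- conj c * c = 1 for intertwiners
  have hcc : ∀ (c : ℂ) (W : Matrix (Fin d) (Fin d) ℂ), IsUnitaryMat W →
      (W ⊗ₖ (1 : Matrix (Fin k) (Fin k) ℂ)) * V = c • (V * W) →
      (starRingEnd ℂ) c * c = 1 := by
    intro c W hW hrel
    have h1 : ((W ⊗ₖ (1 : Matrix (Fin k) (Fin k) ℂ)) * V)ᴴ *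
        ((W ⊗ₖ (1 : Matrix (Fin k) (Fin k) ℂ)) * V) = 1 := by
      rw [Matrix.conjTranspose_mul, kron_one_conjTranspose, Matrix.mul_assoc,
        ← Matrix.mul_assoc (Wᴴ ⊗ₖ (1 : Matrix (Fin k) (Fin k) ℂ)), ← Matrix.mul_kronecker_mul,
        hW.1, Matrix.one_mul, Matrix.one_kronecker_one, Matrix.one_mul, hV]
    rw [hrel, Matrix.conjTranspose_smul, Matrix.smul_mul, Matrix.mul_smul, smul_smul] at h1
    have h2 : (V * W)ᴴ * (V * W) = 1 := by
      rw [Matrix.conjTranspose_mul, Matrix.mul_assoc, ← Matrix.mul_assoc Vᴴ, hV,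
        Matrix.one_mul, hW.1]
    rw [h2] at h1
    have h3 := congrFun (congrFun h1 ⟨0, hd⟩) ⟨0, hd⟩
    simpa [Matrix.smul_apply, Matrix.one_apply] using h3
  have hchan_of_rel : ∀ (c : ℂ) (W : Matrix (Fin d) (Fin d) ℂ),
      (W ⊗ₖ (1 : Matrix (Fin k) (Fin k) ℂ)) * V = c • (V * W) → chan V W = c • W := by
    intro c W hrel
    rw [chan_eq, hrel, Matrix.mul_smul, ← Matrix.mul_assoc, hV, Matrix.one_mul]
  have hone_ne : (1 : Matrix (Fin d) (Fin d) ℂ) ≠ 0 := by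
    intro h0
    have := congrFun (congrFun h0 ⟨0, hd⟩) ⟨0, hd⟩
    simp [Matrix.one_apply] at this
  have hfwd : ∀ c ∈ gaugeSet V, ‖c‖ = 1 ∧
      ∃ X : Matrix (Fin d) (Fin d) ℂ, X ≠ 0 ∧ chan V X = c • X := by
    rintro c ⟨W, hW, hrel⟩
    refine ⟨conj_mul_eq_one_iff.1 (hcc c W hW hrel), W, ?_, hchan_of_rel c W hrel⟩
    intro hW0
    apply hone_ne
    rw [← hW.2, hW0, Matrix.zero_mul]
  have hbwd : ∀ c : ℂ, ‖c‖ = 1 →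
      ∀ X : Matrix (Fin d) (Fin d) ℂ, X ≠ 0 → chan V X = c • X → c ∈ gaugeSet V := by
    intro c hcabs X hX0 hX
    have hc : (starRingEnd ℂ) c * c = 1 := conj_mul_eq_one_iff.2 hcabs
    obtain ⟨hfix1, hrel1⟩ := eig_rel h hc hX
    have hXH : chan V Xᴴ = (starRingEnd ℂ) c • Xᴴ := by
      rw [chan_conjTranspose, hX, Matrix.conjTranspose_smul]
      rfl
    have hc2 : (starRingEnd ℂ) ((starRingEnd ℂ) c) * (starRingEnd ℂ) c = 1 := by
      rw [Complex.conj_conj, mul_comm]; exact hc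
    obtain ⟨hfix2, -⟩ := eig_rel h hc2 hXH
    rw [Matrix.conjTranspose_conjTranspose] at hfix2
    obtain ⟨μ, hμ⟩ := fixed_point_scalar h hd
      (by rw [Matrix.conjTranspose_mul, Matrix.conjTranspose_conjTranspose]) hfix1
    obtain ⟨ν, hν⟩ := fixed_point_scalar h hd
      (by rw [Matrix.conjTranspose_mul, Matrix.conjTranspose_conjTranspose]) hfix2
    have hdc : (d : ℂ) ≠ 0 := Nat.cast_ne_zero.2 hd.ne'
    have htr1 := congrArg Matrix.trace hμ
    have htr2 := congrArg Matrix.trace hν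
    rw [Matrix.trace_smul, Matrix.trace_one] at htr1 htr2
    have hcard : (Fintype.card (Fin d) : ℂ) = (d : ℂ) := by simp
    have hμν : ν = μ := by
      have hq : (Xᴴ * X).trace = (X * Xᴴ).trace := Matrix.trace_mul_comm _ _
      rw [htr1, htr2] at hq
      have := hq
      simp only [smul_eq_mul] at this
      exact mul_right_cancel₀ (by simp [hdc]) this.symm
    obtain ⟨r, hr0, hrtr⟩ := psd_trace_real (Matrix.posSemidef_conjTranspose_mul_self X)
    have hμr : μ * (d : ℂ) = (r : ℂ) := by
      rw [← hrtr, htr1]; simp [smul_eq_mul, mul_comm]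
    set t : ℝ := r / d with htdef
    have hμt : μ = (t : ℂ) := by
      rw [htdef]
      push_cast
      field_simp at hμr ⊢
      linear_combination hμr
    have ht0 : 0 ≤ t := div_nonneg hr0 (Nat.cast_nonneg d)
    have htne : t ≠ 0 := by
      intro h0
      apply hX0
      rw [← Matrix.conjTranspose_mul_self_eq_zero, hμ, hμt, h0]
      simp
    have htpos : 0 < t := lt_of_le_of_ne ht0 (Ne.symm htne)
    set s : ℝ := Real.sqrt t with hsdef
    have hs : 0 < s := Real.sqrt_pos.2 htpos
    have hss : (s : ℂ) * (s : ℂ) = (t : ℂ) := by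
      norm_cast
      exact Real.mul_self_sqrt ht0
    have hsne : (s : ℂ) ≠ 0 := by
      simpa using Complex.ofReal_ne_zero.2 hs.ne'
    have hstar : star ((s : ℂ)⁻¹) = (s : ℂ)⁻¹ := by
      rw [star_inv₀, show star (s : ℂ) = (s : ℂ) from Complex.conj_ofReal s]
    refine ⟨(s : ℂ)⁻¹ • X, ⟨?_, ?_⟩, ?_⟩
    · rw [Matrix.conjTranspose_smul, Matrix.smul_mul, Matrix.mul_smul, smul_smul, hμ, hμt,
        smul_smul, hstar]
      rw [show (s : ℂ)⁻¹ * (s : ℂ)⁻¹ * (t : ℂ) = 1 by rw [← hss]; field_simp]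
      rw [one_smul]
    · rw [Matrix.conjTranspose_smul, Matrix.smul_mul, Matrix.mul_smul, smul_smul, hν, hμν, hμt,
        smul_smul, hstar]
      rw [show (s : ℂ)⁻¹ * (s : ℂ)⁻¹ * (t : ℂ) = 1 by rw [← hss]; field_simp]
      rw [one_smul]
    · rw [Matrix.smul_kronecker, Matrix.smul_mul, hrel1, Matrix.mul_smul, smul_comm]
  refine ⟨fun c hc => (hfwd c hc).1, fun c W _ hrel => hchan_of_rel c W hrel, ?_, ?_, ?_, ?_, ?_, ?_⟩
  · ext c
    constructor
    · exact fun hc => hfwd c hc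
    · rintro ⟨h1, X, h2, h3⟩
      exact hbwd c h1 X h2 h3
  · exact Set.Finite.subset (eig_finite V) fun c hc => (hfwd c hc).2
  · refine ⟨1, ⟨by simp, by simp⟩, ?_⟩
    rw [Matrix.one_kronecker_one, Matrix.one_mul, Matrix.mul_one, one_smul]
  · rintro c ⟨W, hW, hrel⟩ c' ⟨W', hW', hrel'⟩
    refine ⟨W * W', ⟨?_, ?_⟩, ?_⟩
    · rw [Matrix.conjTranspose_mul, Matrix.mul_assoc, ← Matrix.mul_assoc Wᴴ, hW.1,
        Matrix.one_mul, hW'.1]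
    · rw [Matrix.conjTranspose_mul, Matrix.mul_assoc, ← Matrix.mul_assoc W', hW'.2,
        Matrix.one_mul, hW.2]
    · have hk : (W * W') ⊗ₖ (1 : Matrix (Fin k) (Fin k) ℂ) =
          (W ⊗ₖ (1 : Matrix (Fin k) (Fin k) ℂ)) * (W' ⊗ₖ (1 : Matrix (Fin k) (Fin k) ℂ)) := by
        rw [← Matrix.mul_kronecker_mul, Matrix.one_mul]
      rw [hk, Matrix.mul_assoc, hrel', Matrix.mul_smul, ← Matrix.mul_assoc, hrel,
        Matrix.smul_mul, smul_smul, Matrix.mul_assoc, mul_comm c' c]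
  · rintro c ⟨W, hW, hrel⟩
    have hc := hcc c W hW hrel
    have hcne : c ≠ 0 := by
      intro h0; rw [h0] at hc; simp at hc
    refine ⟨Wᴴ, ⟨?_, ?_⟩, ?_⟩
    · rw [Matrix.conjTranspose_conjTranspose]; exact hW.2
    · rw [Matrix.conjTranspose_conjTranspose]; exact hW.1
    · exact rel_inv hcne hW hrel
  · intro c W W' hW hW' hrel hrel'
    have hc := hcc c W hW hrel
    have hcne : c ≠ 0 := by
      intro h0; rw [h0] at hc; simp at hc
    have hiW := rel_inv hcne hW hrel
    have hiW' := rel_inv hcne hW' hrel'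
    have hU1 : ((W' * Wᴴ) ⊗ₖ (1 : Matrix (Fin k) (Fin k) ℂ)) * V = V * (W' * Wᴴ) := by
      have hk : (W' * Wᴴ) ⊗ₖ (1 : Matrix (Fin k) (Fin k) ℂ) =
          (W' ⊗ₖ (1 : Matrix (Fin k) (Fin k) ℂ)) * (Wᴴ ⊗ₖ (1 : Matrix (Fin k) (Fin k) ℂ)) := by
        rw [← Matrix.mul_kronecker_mul, Matrix.one_mul]
      rw [hk, Matrix.mul_assoc, hiW, Matrix.mul_smul, ← Matrix.mul_assoc, hrel',
        Matrix.smul_mul, smul_smul, inv_mul_cancel₀ hcne, one_smul, Matrix.mul_assoc]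
    have hU2 : ((W' * Wᴴ)ᴴ ⊗ₖ (1 : Matrix (Fin k) (Fin k) ℂ)) * V = V * (W' * Wᴴ)ᴴ := by
      have hUH : (W' * Wᴴ)ᴴ = W * W'ᴴ := by
        rw [Matrix.conjTranspose_mul, Matrix.conjTranspose_conjTranspose]
      rw [hUH]
      have hk : (W * W'ᴴ) ⊗ₖ (1 : Matrix (Fin k) (Fin k) ℂ) =
          (W ⊗ₖ (1 : Matrix (Fin k) (Fin k) ℂ)) * (W'ᴴ ⊗ₖ (1 : Matrix (Fin k) (Fin k) ℂ)) := by
        rw [← Matrix.mul_kronecker_mul, Matrix.one_mul]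
      rw [hk, Matrix.mul_assoc, hiW', Matrix.mul_smul, ← Matrix.mul_assoc, hrel,
        Matrix.smul_mul, smul_smul, inv_mul_cancel₀ hcne, one_smul, Matrix.mul_assoc]
    obtain ⟨μ, hμ⟩ := scalar_of_intertwine h hd hU1 hU2
    have hUU : (W' * Wᴴ) * (W' * Wᴴ)ᴴ = 1 := by
      rw [Matrix.conjTranspose_mul, Matrix.conjTranspose_conjTranspose, Matrix.mul_assoc,
        ← Matrix.mul_assoc Wᴴ, hW.1, Matrix.one_mul, hW'.2]
    have hμμ : μ * star μ = 1 := by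
      rw [hμ] at hUU
      rw [Matrix.conjTranspose_smul, Matrix.conjTranspose_one, Matrix.smul_mul,
        Matrix.mul_smul, smul_smul, Matrix.one_mul] at hUU
      have h3 := congrFun (congrFun hUU ⟨0, hd⟩) ⟨0, hd⟩
      simpa [Matrix.smul_apply, Matrix.one_apply] using h3
    have habsμ : ‖μ‖ = 1 := conj_mul_eq_one_iff.1 (by rw [mul_comm] at hμμ; exact hμμ)
    have hexp : Complex.exp (↑(Complex.arg μ) * Complex.I) = μ := by
      have := Complex.norm_mul_exp_arg_mul_I μ
      rwa [habsμ, Complex.ofReal_one, one_mul] at this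
    refine ⟨Complex.arg μ, ?_⟩
    have hUW : (W' * Wᴴ) * W = W' := by
      rw [Matrix.mul_assoc, hW.1, Matrix.mul_one]
    rw [← hUW, hμ, Matrix.smul_mul, Matrix.one_mul, hexp]


end QMCPaper
end
end

section
/- Let V be a (d·k)×d complex matrix with VᴴV = 1_d, let p ≥ 1, and let P₀,…,P_{p−1} be d×d orthogonal projections, pairwise orthogonal, summing to the identity, and satisfying V P_a = (P_{a⊕1} ⊗ 1_k) V for every a (⊕ = addition mod p). Let ρˢˢ be a positive definite d×d matrix of trace one commuting with every P_a. Set γ := e^{2πi/p}, Z := Σ_a γ^a P_a, let 𝒯 := { A : (d·k)×d complex matrix with V Vᴴ A = 0 }, put the inner product (A,B) := tr(ρˢˢ Aᴴ B) on 𝒯, and define the linear map U(A) := γ (Zᴴ ⊗ 1_k) A Z. Then: U maps 𝒯 into itself; U preserves the inner product, i.e. (U A, U B) = (A, B) for all A, B ∈ 𝒯; U^p = Id; and 𝒯 decomposes as the orthogonal direct sum ⊕_{m=0}^{p−1} 𝒱_m, where 𝒱_m := { A ∈ 𝒯 : A P_a = (P_{a⊕1−m} ⊗ 1_k) A for every a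 } and U(A) = γ^m A for every A ∈ 𝒱_m. -/
open Matrix Filter
open scoped Kronecker ComplexConjugate ComplexOrder

noncomputable section

namespace QMCPaper

/-- The primitive `p`-th root of unity `γ = e^{2πi/p}`. -/
def rootOfUnityC (p : ℕ) : ℂ := Complex.exp (2 * Real.pi * Complex.I / p)

/-- The unitary `Z = Σ_a γ^a P_a` built from the periodic projections. -/
def Zmat {d p : ℕ} (P : Fin p → Matrix (Fin d) (Fin d) ℂ) :
    Matrix (Fin d) (Fin d) ℂ :=
  ∑ a : Fin p, rootOfUnityC p ^ (a : ℕ) • P a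

/-- The action `U(A) = γ (Zᴴ ⊗ 1_k) A Z` of the stabiliser generator on
`(dk)×d` matrices. -/
def stabAct {d k p : ℕ} (P : Fin p → Matrix (Fin d) (Fin d) ℂ)
    (A : Matrix (Fin d × Fin k) (Fin d) ℂ) : Matrix (Fin d × Fin k) (Fin d) ℂ :=
  rootOfUnityC p • (((Zmat P)ᴴ ⊗ₖ (1 : Matrix (Fin k) (Fin k) ℂ)) * A * Zmat P)

/-- The eigenspace `𝒱_m ⊆ 𝒯` of the stabiliser action. -/
def eigSpace {d k p : ℕ} [NeZero p] (V : Matrix (Fin d × Fin k) (Fin d) ℂ)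
    (P : Fin p → Matrix (Fin d) (Fin d) ℂ) (m : Fin p) :
    Set (Matrix (Fin d × Fin k) (Fin d) ℂ) :=
  {A | V * Vᴴ * A = 0 ∧
    ∀ a, A * P a = (P (a + 1 - m) ⊗ₖ (1 : Matrix (Fin k) (Fin k) ℂ)) * A}

section Aux
set_option linter.unusedSectionVars false
set_option linter.unusedVariables false

variable {d k p : ℕ} [NeZero p]

lemma root_prim : IsPrimitiveRoot (rootOfUnityC p) p :=
  Complex.isPrimitiveRoot_exp p (NeZero.ne p)

lemma root_pow_p : rootOfUnityC p ^ p = 1 := (root_prim (p := p)).pow_eq_one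

lemma root_ne_zero : rootOfUnityC p ≠ 0 := by
  intro h
  have := root_pow_p (p := p)
  rw [h, zero_pow (NeZero.ne p)] at this
  exact zero_ne_one this

lemma root_pow_mod (x : ℕ) : rootOfUnityC p ^ x = rootOfUnityC p ^ (x % p) := by
  conv_lhs => rw [← Nat.div_add_mod x p]
  rw [pow_add, pow_mul, root_pow_p, one_pow, one_mul]

lemma root_star : (starRingEnd ℂ) (rootOfUnityC p) = (rootOfUnityC p)⁻¹ := by
  unfold rootOfUnityC
  rw [← Complex.exp_conj, ← Complex.exp_neg]
  congr 1
  simp only [map_div₀, _root_.map_mul, Complex.conj_I, Complex.conj_ofReal, map_ofNat,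
    Complex.conj_natCast]
  ring

lemma root_star_pow (n : ℕ) :
    (starRingEnd ℂ) (rootOfUnityC p ^ n) = (rootOfUnityC p ^ n)⁻¹ := by
  rw [map_pow, root_star, inv_pow]

lemma kron_mul (X Y : Matrix (Fin d) (Fin d) ℂ) :
    (X ⊗ₖ (1 : Matrix (Fin k) (Fin k) ℂ)) * (Y ⊗ₖ 1) = (X * Y) ⊗ₖ 1 := by
  rw [← Matrix.mul_kronecker_mul, one_mul]

lemma kron_conjT (X : Matrix (Fin d) (Fin d) ℂ) :
    (X ⊗ₖ (1 : Matrix (Fin k) (Fin k) ℂ))ᴴ = Xᴴ ⊗ₖ 1 := by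
  ext ⟨i1, i2⟩ ⟨j1, j2⟩
  simp only [Matrix.conjTranspose_apply, Matrix.kroneckerMap_apply, Matrix.one_apply]
  by_cases h : i2 = j2
  · simp [h]
  · simp [h, Ne.symm h]

lemma sum_kron {ι : Type*} (s : Finset ι) (f : ι → Matrix (Fin d) (Fin d) ℂ)
    (B : Matrix (Fin k) (Fin k) ℂ) :
    (∑ a ∈ s, f a) ⊗ₖ B = ∑ a ∈ s, f a ⊗ₖ B := by
  ext ⟨i1, i2⟩ ⟨j1, j2⟩
  simp [Matrix.kroneckerMap_apply, Matrix.sum_apply, Finset.sum_mul]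

lemma Z_mul_proj (P : Fin p → Matrix (Fin d) (Fin d) ℂ)
    (hidem : ∀ a, P a * P a = P a) (horth : ∀ a b, a ≠ b → P a * P b = 0) (b : Fin p) :
    Zmat P * P b = rootOfUnityC p ^ (b : ℕ) • P b := by
  unfold Zmat
  rw [Finset.sum_mul, Finset.sum_eq_single b]
  · rw [smul_mul_assoc, hidem]
  · intro a _ hab
    rw [smul_mul_assoc, horth a b hab, smul_zero]
  · simp

lemma proj_mul_Z (P : Fin p → Matrix (Fin d) (Fin d) ℂ)
    (hidem : ∀ a, P a * P a = P a) (horth : ∀ a b, a ≠ b → P a * P b = 0) (b : Fin p) :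
    P b * Zmat P = rootOfUnityC p ^ (b : ℕ) • P b := by
  unfold Zmat
  rw [Finset.mul_sum, Finset.sum_eq_single b]
  · rw [mul_smul_comm, hidem]
  · intro a _ hab
    rw [mul_smul_comm, horth b a (Ne.symm hab), smul_zero]
  · simp

lemma ZH_eq (P : Fin p → Matrix (Fin d) (Fin d) ℂ) (hherm : ∀ a, (P a)ᴴ = P a) :
    (Zmat P)ᴴ = ∑ a : Fin p, (starRingEnd ℂ) (rootOfUnityC p ^ (a : ℕ)) • P a := by
  unfold Zmat
  rw [Matrix.conjTranspose_sum]
  exact Finset.sum_congr rfl fun a _ => by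
    rw [Matrix.conjTranspose_smul, hherm, starRingEnd_apply]

lemma ZH_mul_proj (P : Fin p → Matrix (Fin d) (Fin d) ℂ) (hherm : ∀ a, (P a)ᴴ = P a)
    (hidem : ∀ a, P a * P a = P a) (horth : ∀ a b, a ≠ b → P a * P b = 0) (b : Fin p) :
    (Zmat P)ᴴ * P b = (starRingEnd ℂ) (rootOfUnityC p ^ (b : ℕ)) • P b := by
  rw [ZH_eq P hherm, Finset.sum_mul, Finset.sum_eq_single b]
  · rw [smul_mul_assoc, hidem]
  · intro a _ hab
    rw [smul_mul_assoc, horth a b hab, smul_zero]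
  · simp


lemma Z_mul_ZH (P : Fin p → Matrix (Fin d) (Fin d) ℂ) (hherm : ∀ a, (P a)ᴴ = P a)
    (hidem : ∀ a, P a * P a = P a) (horth : ∀ a b, a ≠ b → P a * P b = 0)
    (hsum : ∑ a, P a = 1) :
    Zmat P * (Zmat P)ᴴ = 1 := by
  rw [ZH_eq P hherm, Finset.mul_sum, ← hsum]
  refine Finset.sum_congr rfl fun b _ => ?_
  rw [mul_smul_comm, Z_mul_proj P hidem horth b, smul_smul, root_star_pow,
    inv_mul_cancel₀ (pow_ne_zero _ root_ne_zero), one_smul]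

lemma ZH_mul_Z (P : Fin p → Matrix (Fin d) (Fin d) ℂ) (hherm : ∀ a, (P a)ᴴ = P a)
    (hidem : ∀ a, P a * P a = P a) (horth : ∀ a b, a ≠ b → P a * P b = 0)
    (hsum : ∑ a, P a = 1) :
    (Zmat P)ᴴ * Zmat P = 1 := by
  rw [ZH_eq P hherm, Finset.sum_mul, ← hsum]
  refine Finset.sum_congr rfl fun b _ => ?_
  rw [smul_mul_assoc, proj_mul_Z P hidem horth b, smul_smul, root_star_pow,
    inv_mul_cancel₀ (pow_ne_zero _ root_ne_zero), one_smul]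

lemma Z_pow (P : Fin p → Matrix (Fin d) (Fin d) ℂ)
    (hidem : ∀ a, P a * P a = P a) (horth : ∀ a b, a ≠ b → P a * P b = 0)
    (hsum : ∑ a, P a = 1) (n : ℕ) :
    Zmat P ^ n = ∑ a : Fin p, (rootOfUnityC p ^ (a : ℕ)) ^ n • P a := by
  induction n with
  | zero => simp [hsum]
  | succ n ih =>
      rw [pow_succ, ih, Finset.sum_mul]
      refine Finset.sum_congr rfl fun b _ => ?_
      rw [smul_mul_assoc, proj_mul_Z P hidem horth b, smul_smul, pow_succ, mul_comm]

lemma Z_pow_p (P : Fin p → Matrix (Fin d) (Fin d) ℂ)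
    (hidem : ∀ a, P a * P a = P a) (horth : ∀ a b, a ≠ b → P a * P b = 0)
    (hsum : ∑ a, P a = 1) :
    Zmat P ^ p = 1 := by
  rw [Z_pow P hidem horth hsum p, ← hsum]
  refine Finset.sum_congr rfl fun b _ => ?_
  rw [← pow_mul, mul_comm, pow_mul, root_pow_p, one_pow, one_smul]

lemma chi_add (x y : Fin p) :
    rootOfUnityC p ^ (((x + y) : Fin p) : ℕ) = rootOfUnityC p ^ (x : ℕ) * rootOfUnityC p ^ (y : ℕ) := by
  rw [Fin.val_add, ← root_pow_mod, pow_add]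

lemma chi_one : rootOfUnityC p ^ (((1 : Fin p)) : ℕ) = rootOfUnityC p := by
  rw [Fin.val_one', ← root_pow_mod, pow_one]

lemma scalar_eq (m a : Fin p) :
    rootOfUnityC p * (rootOfUnityC p ^ (a : ℕ) *
      (starRingEnd ℂ) (rootOfUnityC p ^ (((a + 1 - m) : Fin p) : ℕ))) =
    rootOfUnityC p ^ (m : ℕ) := by
  have h : rootOfUnityC p ^ (m : ℕ) * rootOfUnityC p ^ (((a + 1 - m) : Fin p) : ℕ)
      = rootOfUnityC p * rootOfUnityC p ^ (a : ℕ) := by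
    rw [← chi_add, (by rw [add_sub_cancel] : m + (a + 1 - m) = a + 1), chi_add, chi_one, mul_comm]
  rw [root_star_pow, ← mul_assoc, ← h, mul_assoc,
    mul_inv_cancel₀ (pow_ne_zero _ root_ne_zero), mul_one]

lemma VH_proj (V : Matrix (Fin d × Fin k) (Fin d) ℂ)
    (P : Fin p → Matrix (Fin d) (Fin d) ℂ) (hherm : ∀ a, (P a)ᴴ = P a)
    (hper : ∀ a, V * P a = (P (a + 1) ⊗ₖ (1 : Matrix (Fin k) (Fin k) ℂ)) * V) (b : Fin p) :
    Vᴴ * (P b ⊗ₖ (1 : Matrix (Fin k) (Fin k) ℂ)) = P (b - 1) * Vᴴ := by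
  have h := congrArg Matrix.conjTranspose (hper (b - 1))
  rw [Matrix.conjTranspose_mul, Matrix.conjTranspose_mul, kron_conjT, hherm, hherm,
    sub_add_cancel] at h
  exact h.symm

lemma VV_proj_comm (V : Matrix (Fin d × Fin k) (Fin d) ℂ)
    (P : Fin p → Matrix (Fin d) (Fin d) ℂ) (hherm : ∀ a, (P a)ᴴ = P a)
    (hper : ∀ a, V * P a = (P (a + 1) ⊗ₖ (1 : Matrix (Fin k) (Fin k) ℂ)) * V) (b : Fin p) :
    V * Vᴴ * (P b ⊗ₖ (1 : Matrix (Fin k) (Fin k) ℂ)) =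
      (P b ⊗ₖ (1 : Matrix (Fin k) (Fin k) ℂ)) * (V * Vᴴ) := by
  have h := hper (b - 1)
  rw [sub_add_cancel] at h
  rw [Matrix.mul_assoc, VH_proj V P hherm hper b, ← Matrix.mul_assoc, h, Matrix.mul_assoc]

lemma VV_ZH_comm (V : Matrix (Fin d × Fin k) (Fin d) ℂ)
    (P : Fin p → Matrix (Fin d) (Fin d) ℂ) (hherm : ∀ a, (P a)ᴴ = P a)
    (hper : ∀ a, V * P a = (P (a + 1) ⊗ₖ (1 : Matrix (Fin k) (Fin k) ℂ)) * V) :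
    V * Vᴴ * ((Zmat P)ᴴ ⊗ₖ (1 : Matrix (Fin k) (Fin k) ℂ)) =
      ((Zmat P)ᴴ ⊗ₖ (1 : Matrix (Fin k) (Fin k) ℂ)) * (V * Vᴴ) := by
  rw [ZH_eq P hherm, sum_kron, Finset.mul_sum, Finset.sum_mul]
  refine Finset.sum_congr rfl fun b _ => ?_
  rw [Matrix.smul_kronecker, mul_smul_comm, smul_mul_assoc,
    VV_proj_comm V P hherm hper b]

lemma Z_comm_rho (P : Fin p → Matrix (Fin d) (Fin d) ℂ)
    (ρ : Matrix (Fin d) (Fin d) ℂ) (hcomm : ∀ a, ρ * P a = P a * ρ) :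
    Zmat P * ρ = ρ * Zmat P := by
  unfold Zmat
  rw [Finset.sum_mul, Finset.mul_sum]
  exact Finset.sum_congr rfl fun a _ => by
    rw [smul_mul_assoc, mul_smul_comm, hcomm]

lemma stabAct_iter (P : Fin p → Matrix (Fin d) (Fin d) ℂ)
    (A : Matrix (Fin d × Fin k) (Fin d) ℂ) (n : ℕ) :
    (stabAct P)^[n] A = (rootOfUnityC p ^ n) •
      (((((Zmat P)ᴴ) ^ n) ⊗ₖ (1 : Matrix (Fin k) (Fin k) ℂ)) * A * Zmat P ^ n) := by
  induction n with
  | zero => simp [Matrix.one_kronecker_one]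
  | succ n ih =>
      rw [Function.iterate_succ_apply', ih, stabAct]
      rw [Matrix.mul_smul, Matrix.smul_mul, smul_smul, ← pow_succ']
      congr 1
      rw [← Matrix.mul_assoc, ← Matrix.mul_assoc, kron_mul, ← pow_succ']
      rw [Matrix.mul_assoc, Matrix.mul_assoc, ← pow_succ]
      rw [← Matrix.mul_assoc]


end Aux

/-- the unitary action of the stabiliser generator on the identifiable
tangent space `𝒯 = {A : V Vᴴ A = 0}` and its eigenspace decomposition. -/
theorem stabiliser_action_decomposition {d k p : ℕ} [NeZero p]
    (V : Matrix (Fin d × Fin k) (Fin d) ℂ) (hV : Vᴴ * V = 1)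
    (P : Fin p → Matrix (Fin d) (Fin d) ℂ)
    (hherm : ∀ a, (P a)ᴴ = P a)
    (hidem : ∀ a, P a * P a = P a)
    (horth : ∀ a b, a ≠ b → P a * P b = 0)
    (hsum : ∑ a, P a = 1)
    (hper : ∀ a, V * P a = (P (a + 1) ⊗ₖ (1 : Matrix (Fin k) (Fin k) ℂ)) * V)
    (ρss : Matrix (Fin d) (Fin d) ℂ) (hpd : ρss.PosDef) (htr : ρss.trace = 1)
    (hcomm : ∀ a, ρss * P a = P a * ρss) :
    -- `U` maps `𝒯` into itself
    (∀ A : Matrix (Fin d × Fin k) (Fin d) ℂ, V * Vᴴ * A = 0 →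
      V * Vᴴ * stabAct P A = 0) ∧
    -- `U` preserves the inner product `(A,B) = tr(ρˢˢ Aᴴ B)` on `𝒯`
    (∀ A B : Matrix (Fin d × Fin k) (Fin d) ℂ, V * Vᴴ * A = 0 → V * Vᴴ * B = 0 →
      (ρss * (stabAct P A)ᴴ * stabAct P B).trace = (ρss * Aᴴ * B).trace) ∧
    -- `U^p = Id` on `𝒯`
    (∀ A : Matrix (Fin d × Fin k) (Fin d) ℂ, V * Vᴴ * A = 0 →
      (stabAct P)^[p] A = A) ∧
    -- each `𝒱_m` is contained in `𝒯` and consists of eigenvectors of `U` with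
    -- eigenvalue `γ^m`
    (∀ (m : Fin p) (A : Matrix (Fin d × Fin k) (Fin d) ℂ), A ∈ eigSpace V P m →
      V * Vᴴ * A = 0 ∧ stabAct P A = rootOfUnityC p ^ (m : ℕ) • A) ∧
    -- the `𝒱_m` are mutually orthogonal
    (∀ m m' : Fin p, m ≠ m' →
      ∀ A B : Matrix (Fin d × Fin k) (Fin d) ℂ,
        A ∈ eigSpace V P m → B ∈ eigSpace V P m' → (ρss * Aᴴ * B).trace = 0) ∧
    -- `𝒯` is the (direct) sum of the `𝒱_m`
    (∀ A : Matrix (Fin d × Fin k) (Fin d) ℂ, V * Vᴴ * A = 0 →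
      ∃! f : Fin p → Matrix (Fin d × Fin k) (Fin d) ℂ,
        (∀ m, f m ∈ eigSpace V P m) ∧ A = ∑ m, f m) := by
  have hZZH : Zmat P * (Zmat P)ᴴ = 1 := Z_mul_ZH P hherm hidem horth hsum
  -- Part 1
  have part1 : ∀ A : Matrix (Fin d × Fin k) (Fin d) ℂ, V * Vᴴ * A = 0 →
      V * Vᴴ * stabAct P A = 0 := by
    intro A hA
    rw [stabAct, Matrix.mul_smul, ← Matrix.mul_assoc, ← Matrix.mul_assoc,
      VV_ZH_comm V P hherm hper,
      Matrix.mul_assoc (((Zmat P)ᴴ) ⊗ₖ (1 : Matrix (Fin k) (Fin k) ℂ)) (V * Vᴴ) A,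
      hA, Matrix.mul_zero, Matrix.zero_mul, smul_zero]
  -- Part 2
  have part2 : ∀ A B : Matrix (Fin d × Fin k) (Fin d) ℂ, V * Vᴴ * A = 0 → V * Vᴴ * B = 0 →
      (ρss * (stabAct P A)ᴴ * stabAct P B).trace = (ρss * Aᴴ * B).trace := by
    intro A B _ _
    rw [stabAct, stabAct, Matrix.conjTranspose_smul, Matrix.conjTranspose_mul,
      Matrix.conjTranspose_mul, kron_conjT, Matrix.conjTranspose_conjTranspose]
    simp only [Matrix.mul_smul, Matrix.smul_mul, smul_smul, Matrix.trace_smul]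
    rw [← starRingEnd_apply, root_star, mul_inv_cancel₀ root_ne_zero, one_smul]
    have e1 : ρss * ((Zmat P)ᴴ * (Aᴴ * (Zmat P ⊗ₖ (1 : Matrix (Fin k) (Fin k) ℂ)))) *
        (((Zmat P)ᴴ ⊗ₖ (1 : Matrix (Fin k) (Fin k) ℂ)) * B * Zmat P) =
        ρss * (Zmat P)ᴴ * (Aᴴ * B) * Zmat P := by
      have e2 : (Zmat P ⊗ₖ (1 : Matrix (Fin k) (Fin k) ℂ)) *
          (((Zmat P)ᴴ ⊗ₖ (1 : Matrix (Fin k) (Fin k) ℂ)) * (B * Zmat P)) = B * Zmat P := by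
        rw [← Matrix.mul_assoc, kron_mul, hZZH, Matrix.one_kronecker_one, Matrix.one_mul]
      calc ρss * ((Zmat P)ᴴ * (Aᴴ * (Zmat P ⊗ₖ (1 : Matrix (Fin k) (Fin k) ℂ)))) *
            (((Zmat P)ᴴ ⊗ₖ (1 : Matrix (Fin k) (Fin k) ℂ)) * B * Zmat P)
          = ρss * ((Zmat P)ᴴ * (Aᴴ * ((Zmat P ⊗ₖ (1 : Matrix (Fin k) (Fin k) ℂ)) *
            (((Zmat P)ᴴ ⊗ₖ (1 : Matrix (Fin k) (Fin k) ℂ)) * (B * Zmat P))))) := by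
            simp only [Matrix.mul_assoc]
        _ = ρss * ((Zmat P)ᴴ * (Aᴴ * (B * Zmat P))) := by rw [e2]
        _ = ρss * (Zmat P)ᴴ * (Aᴴ * B) * Zmat P := by simp only [Matrix.mul_assoc]
    rw [e1, Matrix.trace_mul_comm (ρss * (Zmat P)ᴴ * (Aᴴ * B)) (Zmat P)]
    have e3 : Zmat P * (ρss * (Zmat P)ᴴ * (Aᴴ * B)) = ρss * Aᴴ * B := by
      rw [← Matrix.mul_assoc, ← Matrix.mul_assoc (Zmat P) ρss ((Zmat P)ᴴ),
        Z_comm_rho P ρss hcomm, Matrix.mul_assoc ρss (Zmat P) ((Zmat P)ᴴ), hZZH,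
        Matrix.mul_one, Matrix.mul_assoc]
    rw [e3]
  -- Part 3
  have part3 : ∀ A : Matrix (Fin d × Fin k) (Fin d) ℂ, V * Vᴴ * A = 0 →
      (stabAct P)^[p] A = A := by
    intro A _
    rw [stabAct_iter, root_pow_p, ← Matrix.conjTranspose_pow,
      Z_pow_p P hidem horth hsum, Matrix.conjTranspose_one, Matrix.one_kronecker_one,
      Matrix.one_mul, Matrix.mul_one, one_smul]
  -- Part 4
  have part4 : ∀ (m : Fin p) (A : Matrix (Fin d × Fin k) (Fin d) ℂ), A ∈ eigSpace V P m →
      V * Vᴴ * A = 0 ∧ stabAct P A = rootOfUnityC p ^ (m : ℕ) • A := by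
    rintro m A ⟨hT, hA⟩
    refine ⟨hT, ?_⟩
    rw [stabAct]
    have hAZ : A * Zmat P = ∑ a : Fin p, rootOfUnityC p ^ (a : ℕ) •
        ((P (a + 1 - m) ⊗ₖ (1 : Matrix (Fin k) (Fin k) ℂ)) * A) := by
      unfold Zmat
      rw [Matrix.mul_sum]
      exact Finset.sum_congr rfl fun a _ => by rw [Matrix.mul_smul, hA a]
    rw [Matrix.mul_assoc, hAZ, Matrix.mul_sum, Finset.smul_sum]
    have hterm : ∀ a : Fin p,
        rootOfUnityC p • (((Zmat P)ᴴ ⊗ₖ (1 : Matrix (Fin k) (Fin k) ℂ)) *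
          (rootOfUnityC p ^ (a : ℕ) •
            ((P (a + 1 - m) ⊗ₖ (1 : Matrix (Fin k) (Fin k) ℂ)) * A))) =
        rootOfUnityC p ^ (m : ℕ) • (A * P a) := by
      intro a
      rw [Matrix.mul_smul, ← Matrix.mul_assoc, kron_mul,
        ZH_mul_proj P hherm hidem horth (a + 1 - m), Matrix.smul_kronecker,
        Matrix.smul_mul, smul_smul, smul_smul, mul_assoc (rootOfUnityC p),
        scalar_eq m a, ← hA a]
    rw [Finset.sum_congr rfl fun a _ => hterm a, ← Finset.smul_sum, ← Matrix.mul_sum,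
      hsum, Matrix.mul_one]
  -- Part 5
  have part5 : ∀ m m' : Fin p, m ≠ m' →
      ∀ A B : Matrix (Fin d × Fin k) (Fin d) ℂ,
        A ∈ eigSpace V P m → B ∈ eigSpace V P m' → (ρss * Aᴴ * B).trace = 0 := by
    intro m m' hmm' A B hAm hBm'
    obtain ⟨hTA, hUA⟩ := part4 m A hAm
    obtain ⟨hTB, hUB⟩ := part4 m' B hBm'
    have h := part2 A B hTA hTB
    rw [hUA, hUB, Matrix.conjTranspose_smul] at h
    simp only [Matrix.mul_smul, Matrix.smul_mul, smul_smul, Matrix.trace_smul,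
      smul_eq_mul] at h
    by_contra hne
    have hsc : rootOfUnityC p ^ (m' : ℕ) * star (rootOfUnityC p ^ (m : ℕ)) = 1 :=
      mul_right_cancel₀ hne (by rw [one_mul]; exact h)
    have heq : rootOfUnityC p ^ (m' : ℕ) = rootOfUnityC p ^ (m : ℕ) := by
      rw [← starRingEnd_apply, root_star_pow,
        mul_inv_eq_one₀ (pow_ne_zero _ root_ne_zero)] at hsc
      exact hsc
    exact hmm' (Fin.val_injective (root_prim.pow_inj m.isLt m'.isLt heq.symm))
  refine ⟨part1, part2, part3, part4, part5, ?_⟩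
  -- Part 6
  intro A hA
  have hproj := VV_proj_comm V P hherm hper
  have hne : ∀ {m m' : Fin p}, m ≠ m' → ∀ a : Fin p, a + 1 - m ≠ a + 1 - m' := by
    intro m m' h a hh
    exact h (sub_right_inj.mp hh)
  have hne2 : ∀ {a c : Fin p} (m : Fin p), a ≠ c → a + 1 - m ≠ c + 1 - m := by
    intro a c m h hh
    exact h (add_right_cancel (sub_left_inj.mp hh))
  have hsum' : ∀ a : Fin p, ∑ m : Fin p, P (a + 1 - m) = 1 := by
    intro a
    rw [← hsum]
    exact Fintype.sum_equiv (Equiv.subLeft (a + 1)) _ _ (fun m => rfl)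
  refine ⟨fun m => ∑ a : Fin p,
      (P (a + 1 - m) ⊗ₖ (1 : Matrix (Fin k) (Fin k) ℂ)) * A * P a, ⟨?_, ?_⟩, ?_⟩
  · -- membership
    intro m
    constructor
    · rw [Matrix.mul_sum]
      refine Finset.sum_eq_zero fun a _ => ?_
      rw [← Matrix.mul_assoc, ← Matrix.mul_assoc, hproj,
        Matrix.mul_assoc ((P (a + 1 - m)) ⊗ₖ (1 : Matrix (Fin k) (Fin k) ℂ)) (V * Vᴴ) A,
        hA, Matrix.mul_zero, Matrix.zero_mul]
    · intro c
      have h1 : (∑ a : Fin p, (P (a + 1 - m) ⊗ₖ (1 : Matrix (Fin k) (Fin k) ℂ)) * A * P a)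
          * P c = (P (c + 1 - m) ⊗ₖ (1 : Matrix (Fin k) (Fin k) ℂ)) * A * P c := by
        rw [Matrix.sum_mul, Finset.sum_eq_single c]
        · rw [Matrix.mul_assoc ((P (c + 1 - m)) ⊗ₖ (1 : Matrix (Fin k) (Fin k) ℂ) * A),
            hidem]
        · intro a _ hac
          rw [Matrix.mul_assoc, horth a c hac, Matrix.mul_zero]
        · simp
      have h2 : (P (c + 1 - m) ⊗ₖ (1 : Matrix (Fin k) (Fin k) ℂ)) *
          (∑ a : Fin p, (P (a + 1 - m) ⊗ₖ (1 : Matrix (Fin k) (Fin k) ℂ)) * A * P a) =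
          (P (c + 1 - m) ⊗ₖ (1 : Matrix (Fin k) (Fin k) ℂ)) * A * P c := by
        rw [Matrix.mul_sum, Finset.sum_eq_single c]
        · rw [← Matrix.mul_assoc, ← Matrix.mul_assoc, kron_mul, hidem]
        · intro a _ hac
          rw [← Matrix.mul_assoc, ← Matrix.mul_assoc, kron_mul,
            horth _ _ (hne2 m (Ne.symm hac)), Matrix.zero_kronecker,
            Matrix.zero_mul, Matrix.zero_mul]
        · simp
      exact h1.trans h2.symm
  · -- A equals the sum
    calc A = A * 1 := (Matrix.mul_one A).symm
      _ = ∑ a : Fin p, A * P a := by rw [← hsum, Matrix.mul_sum]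
      _ = ∑ a : Fin p, ∑ m : Fin p,
          (P (a + 1 - m) ⊗ₖ (1 : Matrix (Fin k) (Fin k) ℂ)) * A * P a := by
          refine Finset.sum_congr rfl fun a _ => ?_
          rw [← Matrix.sum_mul, ← Matrix.sum_mul, ← sum_kron, hsum' a,
            Matrix.one_kronecker_one, Matrix.one_mul]
      _ = ∑ m : Fin p, ∑ a : Fin p,
          (P (a + 1 - m) ⊗ₖ (1 : Matrix (Fin k) (Fin k) ℂ)) * A * P a := Finset.sum_comm
  · -- uniqueness
    rintro g ⟨hg, hgsum⟩
    funext m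
    have key : ∀ m' : Fin p, ∑ a : Fin p,
        (P (a + 1 - m) ⊗ₖ (1 : Matrix (Fin k) (Fin k) ℂ)) * g m' * P a =
        if m' = m then g m else 0 := by
      intro m'
      by_cases h : m' = m
      · subst h
        rw [if_pos rfl]
        have : ∀ a : Fin p, (P (a + 1 - m') ⊗ₖ (1 : Matrix (Fin k) (Fin k) ℂ)) *
            g m' * P a = g m' * P a := by
          intro a
          rw [Matrix.mul_assoc, (hg m').2 a, ← Matrix.mul_assoc, kron_mul, hidem,
            ← (hg m').2 a]
        rw [Finset.sum_congr rfl fun a _ => this a, ← Matrix.mul_sum, hsum,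
          Matrix.mul_one]
      · rw [if_neg h]
        refine Finset.sum_eq_zero fun a _ => ?_
        rw [Matrix.mul_assoc, (hg m').2 a, ← Matrix.mul_assoc, kron_mul,
          horth _ _ (hne (fun hh => h hh.symm) a), Matrix.zero_kronecker,
          Matrix.zero_mul]
    symm
    calc (∑ a : Fin p, (P (a + 1 - m) ⊗ₖ (1 : Matrix (Fin k) (Fin k) ℂ)) * A * P a)
        = ∑ a : Fin p, ∑ m' : Fin p,
          (P (a + 1 - m) ⊗ₖ (1 : Matrix (Fin k) (Fin k) ℂ)) * g m' * P a := by
          refine Finset.sum_congr rfl fun a _ => ?_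
          rw [hgsum, Matrix.mul_sum, Matrix.sum_mul]
      _ = ∑ m' : Fin p, ∑ a : Fin p,
          (P (a + 1 - m) ⊗ₖ (1 : Matrix (Fin k) (Fin k) ℂ)) * g m' * P a := Finset.sum_comm
      _ = ∑ m' : Fin p, if m' = m then g m else 0 :=
          Finset.sum_congr rfl fun m' _ => key m'
      _ = g m := by simp


end QMCPaper
end
end

section
/- Let A and B be n×n complex positive semidefinite matrices, and let √A and √B denote their (unique) positive semidefinite square roots. Then ‖√A − √B‖ ≤ ‖A − B‖^{1/2}, where ‖·‖ denotes the ℓ²-operator norm (largest singular value) of a matrix. -/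
open Matrix
open scoped ComplexOrder

noncomputable section

/-- The positive semidefinite square root of a positive semidefinite matrix
(the definition removed from Mathlib, restored with its old meaning). -/
def Matrix.PosSemidef.sqrt {n 𝕜 : Type*} [Fintype n] [DecidableEq n] [RCLike 𝕜]
    {A : Matrix n n 𝕜} (hA : A.PosSemidef) : Matrix n n 𝕜 :=
  hA.1.eigenvectorUnitary.1 * diagonal ((↑) ∘ (√·) ∘ hA.1.eigenvalues) *
  (star hA.1.eigenvectorUnitary : Matrix n n 𝕜)

lemma Matrix.PosSemidef.posSemidef_sqrt {n 𝕜 : Type*} [Fintype n] [DecidableEq n] [RCLike 𝕜]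
    {A : Matrix n n 𝕜} (hA : A.PosSemidef) : hA.sqrt.PosSemidef := by
  unfold Matrix.PosSemidef.sqrt
  rw [Matrix.star_eq_conjTranspose]
  exact (Matrix.posSemidef_diagonal_iff.mpr fun i => by
    simp [Real.sqrt_nonneg]).mul_mul_conjTranspose_same _

lemma Matrix.PosSemidef.sq_sqrt {n 𝕜 : Type*} [Fintype n] [DecidableEq n] [RCLike 𝕜]
    {A : Matrix n n 𝕜} (hA : A.PosSemidef) : hA.sqrt ^ 2 = A := by
  have hU : (star hA.1.eigenvectorUnitary : Matrix n n 𝕜) * hA.1.eigenvectorUnitary.1 = 1 :=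
    Unitary.coe_star_mul_self _
  have hD : diagonal (((↑) ∘ (√·) ∘ hA.1.eigenvalues : n → 𝕜)) *
      diagonal ((↑) ∘ (√·) ∘ hA.1.eigenvalues) = diagonal ((↑) ∘ hA.1.eigenvalues) := by
    rw [diagonal_mul_diagonal]; congr 1; funext i
    simp only [Function.comp_apply, ← RCLike.ofReal_mul, Real.mul_self_sqrt (hA.eigenvalues_nonneg i)]
  conv_rhs => rw [hA.1.spectral_theorem, Unitary.conjStarAlgAut_apply]
  rw [pow_two, Matrix.PosSemidef.sqrt]
  simp only [Matrix.mul_assoc]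
  rw [← Matrix.mul_assoc (star hA.1.eigenvectorUnitary : Matrix n n 𝕜), hU, Matrix.one_mul,
    ← Matrix.mul_assoc (diagonal _), hD]

namespace QMCPaper

/-- The ℓ²-operator norm (largest singular value) of a complex matrix, defined as the
operator norm of the associated linear map between Euclidean spaces. -/
def l2OpNorm {m n : ℕ} (A : Matrix (Fin m) (Fin n) ℂ) : ℝ :=
  ‖LinearMap.toContinuousLinearMap (Matrix.toEuclideanLin A)‖

lemma l2OpNorm_nonneg {m n : ℕ} (A : Matrix (Fin m) (Fin n) ℂ) : 0 ≤ l2OpNorm A :=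
  norm_nonneg _

/-- `|x⋆ M x| ≤ ‖M‖ ‖x‖²`. -/
lemma norm_dot_mulVec_le {n : ℕ} (M : Matrix (Fin n) (Fin n) ℂ)
    (x : EuclideanSpace ℂ (Fin n)) :
    ‖star (x : Fin n → ℂ) ⬝ᵥ M *ᵥ (x : Fin n → ℂ)‖ ≤ l2OpNorm M * ‖x‖ ^ 2 := by
  have h : star (x : Fin n → ℂ) ⬝ᵥ M *ᵥ (x : Fin n → ℂ)
      = inner ℂ x ((LinearMap.toContinuousLinearMap (Matrix.toEuclideanLin M)) x) := by
    rw [EuclideanSpace.inner_eq_star_dotProduct, dotProduct_comm]; rfl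
  rw [h]
  calc ‖(inner ℂ x ((LinearMap.toContinuousLinearMap (Matrix.toEuclideanLin M)) x) : ℂ)‖
      ≤ ‖x‖ * ‖(LinearMap.toContinuousLinearMap (Matrix.toEuclideanLin M)) x‖ :=
        norm_inner_le_norm _ _
    _ ≤ ‖x‖ * (l2OpNorm M * ‖x‖) := by
        gcongr
        exact (LinearMap.toContinuousLinearMap (Matrix.toEuclideanLin M)).le_opNorm x
    _ = l2OpNorm M * ‖x‖ ^ 2 := by ring

lemma eig_sq_le {n : ℕ} (A B : Matrix (Fin n) (Fin n) ℂ)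
    (hA : A.PosSemidef) (hB : B.PosSemidef)
    (hD : (hA.sqrt - hB.sqrt).IsHermitian) (i : Fin n) :
    (hD.eigenvalues i) ^ 2 ≤ l2OpNorm (A - B) := by
  set D : Matrix (Fin n) (Fin n) ℂ := hA.sqrt - hB.sqrt with hDdef
  set x : EuclideanSpace ℂ (Fin n) := hD.eigenvectorBasis i with hxdef
  set l : ℝ := hD.eigenvalues i with hldef
  set v : Fin n → ℂ := (x : Fin n → ℂ) with hvdef
  have hx1 : ‖x‖ = 1 := (hD.eigenvectorBasis).orthonormal.1 i
  have hv1 : star v ⬝ᵥ v = 1 := by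
    have : (inner ℂ x x : ℂ) = (1 : ℂ) := by
      rw [inner_self_eq_norm_sq_to_K, hx1]; norm_num
    rw [EuclideanSpace.inner_eq_star_dotProduct, dotProduct_comm] at this; exact this
  have h1 : D *ᵥ v = (l : ℂ) • v := by
    have := hD.mulVec_eigenvectorBasis i
    rw [RCLike.real_smul_eq_coe_smul (K := ℂ)] at this
    exact this
  -- the basic identity A - B = √A D + D √B
  have hid : A - B = hA.sqrt * D + D * hB.sqrt := by
    have hA2 : hA.sqrt * hA.sqrt = A := by
      have := hA.sq_sqrt; rwa [pow_two] at this
    have hB2 : hB.sqrt * hB.sqrt = B := by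
      have := hB.sq_sqrt; rwa [pow_two] at this
    rw [hDdef, mul_sub, sub_mul, hA2, hB2]
    abel
  have hsv : star v ᵥ* D = (l : ℂ) • star v := by
    have : star v ᵥ* Dᴴ = star (D *ᵥ v) := (star_mulVec D v).symm
    rw [hD.eq] at this
    rw [this, h1, star_smul]
    simp
  set t : ℂ := star v ⬝ᵥ (hA.sqrt + hB.sqrt) *ᵥ v with htdef
  have hterm1 : star v ⬝ᵥ (hA.sqrt * D) *ᵥ v = (l : ℂ) * (star v ⬝ᵥ hA.sqrt *ᵥ v) := by
    rw [← mulVec_mulVec, h1, mulVec_smul, dotProduct_smul, smul_eq_mul]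
  have hterm2 : star v ⬝ᵥ (D * hB.sqrt) *ᵥ v = (l : ℂ) * (star v ⬝ᵥ hB.sqrt *ᵥ v) := by
    rw [← mulVec_mulVec, dotProduct_mulVec, hsv, smul_dotProduct, smul_eq_mul,
      dotProduct_mulVec]
  have hq : star v ⬝ᵥ (A - B) *ᵥ v = (l : ℂ) * t := by
    rw [hid, add_mulVec, dotProduct_add, hterm1, hterm2, htdef, add_mulVec, dotProduct_add]
    ring
  have hDvv : star v ⬝ᵥ D *ᵥ v = (l : ℂ) := by
    rw [h1, dotProduct_smul, hv1]; simp
  have ht0 : 0 ≤ t := (hA.posSemidef_sqrt.add hB.posSemidef_sqrt).dotProduct_mulVec_nonneg v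
  have hlow : 0 ≤ t - (l : ℂ) := by
    have hps : ((hA.sqrt + hB.sqrt) - D).PosSemidef := by
      have : (hA.sqrt + hB.sqrt) - D = hB.sqrt + hB.sqrt := by rw [hDdef]; abel
      rw [this]; exact hB.posSemidef_sqrt.add hB.posSemidef_sqrt
    have := hps.dotProduct_mulVec_nonneg v
    rwa [sub_mulVec, dotProduct_sub, hDvv] at this
  have hhigh : 0 ≤ t + (l : ℂ) := by
    have hps : ((hA.sqrt + hB.sqrt) + D).PosSemidef := by
      have : (hA.sqrt + hB.sqrt) + D = hA.sqrt + hA.sqrt := by rw [hDdef]; abel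
      rw [this]; exact hA.posSemidef_sqrt.add hA.posSemidef_sqrt
    have := hps.dotProduct_mulVec_nonneg v
    rwa [add_mulVec, dotProduct_add, hDvv] at this
  -- turn into real inequalities
  have htim : t.im = 0 := (Complex.nonneg_iff.mp ht0).2.symm
  have htre : 0 ≤ t.re := (Complex.nonneg_iff.mp ht0).1
  have hlle : l ≤ t.re := by
    have := (Complex.nonneg_iff.mp hlow).1
    simpa using this
  have hlge : -l ≤ t.re := by
    have := (Complex.nonneg_iff.mp hhigh).1
    simp only [Complex.add_re, Complex.ofReal_re] at this
    linarith
  have habs : |l| ≤ t.re := abs_le.mpr ⟨by linarith, hlle⟩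
  -- |l * t| ≤ ‖A - B‖
  have hbound : |l| * t.re ≤ l2OpNorm (A - B) := by
    have h2 := norm_dot_mulVec_le (A - B) x
    rw [hx1] at h2
    have h3 : ‖star v ⬝ᵥ (A - B) *ᵥ v‖ = |l| * t.re := by
      rw [hq, norm_mul, Complex.norm_real, Real.norm_eq_abs]
      congr 1
      rw [Complex.norm_def, Complex.normSq_apply, htim]
      simp [abs_of_nonneg htre, Real.sqrt_mul_self htre]
    rw [h3] at h2
    simpa using h2
  nlinarith [abs_nonneg l, sq_abs l]

/-- Lemma: the positive semidefinite square root is operator-norm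
Hölder-1/2. -/
theorem sqrt_holder {n : ℕ} (A B : Matrix (Fin n) (Fin n) ℂ)
    (hA : A.PosSemidef) (hB : B.PosSemidef) :
    l2OpNorm (hA.sqrt - hB.sqrt) ≤ Real.sqrt (l2OpNorm (A - B)) := by
  set D : Matrix (Fin n) (Fin n) ℂ := hA.sqrt - hB.sqrt with hDdef
  have hD : D.IsHermitian := hA.posSemidef_sqrt.1.sub hB.posSemidef_sqrt.1
  set c : ℝ := l2OpNorm (A - B) with hcdef
  have hc0 : 0 ≤ c := l2OpNorm_nonneg _
  -- c • 1 - D * D is positive semidefinite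
  set U : Matrix (Fin n) (Fin n) ℂ := (hD.eigenvectorUnitary : Matrix (Fin n) (Fin n) ℂ)
    with hUdef
  have hUU : star U * U = 1 := (Unitary.mem_iff.mp hD.eigenvectorUnitary.prop).1
  have hUU' : U * star U = 1 := (Unitary.mem_iff.mp hD.eigenvectorUnitary.prop).2
  set G : Matrix (Fin n) (Fin n) ℂ := diagonal (Complex.ofReal ∘ hD.eigenvalues) with hGdef
  have hsp : D = U * G * star U := by
    have h := hD.spectral_theorem; rw [Unitary.conjStarAlgAut_apply] at h; exact h
  have hM : ((c : ℂ) • (1 : Matrix (Fin n) (Fin n) ℂ) - D * D).PosSemidef := by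
    have hDD : D * D = U * (G * G) * star U := by
      rw [hsp]
      calc (U * G * star U) * (U * G * star U)
          = U * G * (star U * U) * G * star U := by noncomm_ring
        _ = U * (G * G) * star U := by rw [hUU]; noncomm_ring
    have hkey : (c : ℂ) • (1 : Matrix (Fin n) (Fin n) ℂ) - D * D
        = U * ((c : ℂ) • 1 - G * G) * star U := by
      have hexp : U * ((c : ℂ) • 1 - G * G) * star U
          = U * ((c : ℂ) • 1) * star U - U * (G * G) * star U := by
        rw [Matrix.mul_sub, Matrix.sub_mul]
      rw [hexp, ← hDD, Matrix.mul_smul, mul_one, Matrix.smul_mul, hUU']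
    rw [hkey]
    have hdiag : ((c : ℂ) • (1 : Matrix (Fin n) (Fin n) ℂ) - G * G)
        = diagonal (fun i => ((c - hD.eigenvalues i ^ 2 : ℝ) : ℂ)) := by
      rw [hGdef, diagonal_mul_diagonal, Matrix.smul_one_eq_diagonal, diagonal_sub]
      funext i
      simp
      ring
    rw [hdiag, Matrix.star_eq_conjTranspose U]
    exact (Matrix.posSemidef_diagonal_iff.mpr fun i =>
      Complex.zero_le_real.mpr (by linarith [eig_sq_le A B hA hB hD i])).mul_mul_conjTranspose_same U
  -- conclude the operator norm bound
  refine ContinuousLinearMap.opNorm_le_bound _ (Real.sqrt_nonneg _) fun x => ?_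
  set v : Fin n → ℂ := (x : Fin n → ℂ) with hvdef
  have hpos := hM.dotProduct_mulVec_nonneg v
  have hdot : star v ⬝ᵥ ((c : ℂ) • (1 : Matrix (Fin n) (Fin n) ℂ) - D * D) *ᵥ v
      = (c : ℂ) * (star v ⬝ᵥ v) - star v ⬝ᵥ (D * D) *ᵥ v := by
    rw [sub_mulVec, dotProduct_sub, smul_mulVec, one_mulVec, dotProduct_smul]
    simp
  rw [hdot] at hpos
  have hvv : star v ⬝ᵥ v = ((‖x‖ : ℂ)) ^ 2 := by
    have : (inner ℂ x x : ℂ) = (‖x‖ : ℂ) ^ 2 := inner_self_eq_norm_sq_to_K x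
    rw [EuclideanSpace.inner_eq_star_dotProduct, dotProduct_comm] at this; exact this
  set y : EuclideanSpace ℂ (Fin n) := (Matrix.toEuclideanLin D) x with hydef
  have hyv : (y : Fin n → ℂ) = D *ᵥ v := rfl
  have hyy : star (D *ᵥ v) ⬝ᵥ (D *ᵥ v) = ((‖y‖ : ℂ)) ^ 2 := by
    have : (inner ℂ y y : ℂ) = (‖y‖ : ℂ) ^ 2 := inner_self_eq_norm_sq_to_K y
    rw [← this, EuclideanSpace.inner_eq_star_dotProduct, dotProduct_comm]
    rfl
  have hDDdot : star v ⬝ᵥ (D * D) *ᵥ v = ((‖y‖ : ℂ)) ^ 2 := by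
    rw [← hyy, ← mulVec_mulVec, dotProduct_mulVec, star_mulVec]
    congr 1
    rw [hD.eq]
  rw [hDDdot, hvv] at hpos
  -- real inequality : ‖y‖² ≤ c ‖x‖²
  have hre : ‖y‖ ^ 2 ≤ c * ‖x‖ ^ 2 := by
    have h2 := sub_nonneg.mp hpos
    have h3 : ((‖y‖ ^ 2 : ℝ) : ℂ) ≤ ((c * ‖x‖ ^ 2 : ℝ) : ℂ) := by push_cast; exact h2
    exact_mod_cast h3
  have hnorm : ‖y‖ ≤ Real.sqrt c * ‖x‖ := by
    have h1 : ‖y‖ = Real.sqrt (‖y‖ ^ 2) := (Real.sqrt_sq (norm_nonneg _)).symm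
    rw [h1]
    calc Real.sqrt (‖y‖ ^ 2) ≤ Real.sqrt (c * ‖x‖ ^ 2) := Real.sqrt_le_sqrt hre
      _ = Real.sqrt c * ‖x‖ := by
          rw [Real.sqrt_mul hc0, Real.sqrt_sq (norm_nonneg _)]
  exact hnorm

end QMCPaper
end
end

section
/- For θ = (θ₁, θ₂) ∈ ℝ², let ψ_θ := exp(−i(θ₁ σ_y − θ₂ σ_x)) e₀ ∈ ℂ², where σ_x = [[0,1],[1,0]], σ_y = [[0,−i],[i,0]], exp is the matrix exponential, and e₀ = (1,0)ᵀ. Then for all complex numbers z₁ = u₁ + i v₁ and z₂ = u₂ + i v₂ one has lim_{n→∞} ( ⟨ ψ_{(u₁/√n, v₁/√n)}, ψ_{(u₂/√n, v₂/√n)} ⟩ )ⁿ = exp( conj(z₁)·z₂ − |z₁|²/2 − |z₂|²/2 ), where the inner product on ℂ² is conjugate-linear in the first argument. (Equivalently: the inner product of the n-fold tensor powers ψ_{(u₁/√n,v₁/√n)}^{⊗n} and ψ_{(u₂/√n,v₂/√n)}^{⊗n} converges to the overlap ⟨Coh(z₁), Coh(z₂)⟩ of the corresponding coherent states; this is weak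 quantum local asymptotic normality for pure qubit states.) -/
open Matrix Filter
open scoped ComplexConjugate

noncomputable section

namespace QMCPaper

/-- The matrix exponential, defined by its power series. -/
def matExp {ι : Type*} [Fintype ι] [DecidableEq ι] (M : Matrix ι ι ℂ) :
    Matrix ι ι ℂ :=
  ∑' j : ℕ, ((j.factorial : ℂ))⁻¹ • M ^ j

/-- The Pauli matrix `σ_x`. -/
def pauliX : Matrix (Fin 2) (Fin 2) ℂ := !![0, 1; 1, 0]

/-- The Pauli matrix `σ_y`. -/
def pauliY : Matrix (Fin 2) (Fin 2) ℂ := !![0, -Complex.I; Complex.I, 0]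

/-- The rotated qubit state `ψ_θ = exp(−i(θ₁ σ_y − θ₂ σ_x)) e₀`. -/
def qubitState (θ₁ θ₂ : ℝ) : Fin 2 → ℂ :=
  matExp ((-Complex.I) • ((θ₁ : ℂ) • pauliY - (θ₂ : ℂ) • pauliX)) *ᵥ ![1, 0]

/-- The sinc function. -/
def sinc (x : ℝ) : ℝ := if x = 0 then 1 else Real.sin x / x

lemma sin_eq_sinc (x : ℝ) : Real.sin x = x * sinc x := by
  rcases eq_or_ne x 0 with h | h
  · simp [h]
  · simp only [sinc, if_neg h]
    field_simp

lemma tendsto_sinc : Tendsto sinc (nhds 0) (nhds 1) := by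
  rw [← nhdsNE_sup_pure (0:ℝ), tendsto_sup]
  constructor
  · have hd : HasDerivAt Real.sin 1 0 := by simpa using Real.hasDerivAt_sin 0
    rw [hasDerivAt_iff_tendsto_slope] at hd
    refine hd.congr' ?_
    filter_upwards [self_mem_nhdsWithin] with x (hx : x ≠ 0)
    simp [slope_def_field, sinc, hx, div_eq_mul_inv, mul_comm]
  · have : sinc 0 = 1 := by simp [sinc]
    simpa [this] using tendsto_pure_nhds sinc 0

lemma cos_sub_one (x : ℝ) : Real.cos x - 1 = -(x^2/2) * sinc (x/2)^2 := by
  have h1 : Real.sin (x/2)^2 + Real.cos (x/2)^2 = 1 := Real.sin_sq_add_cos_sq _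
  have h2 : Real.cos x = 2 * Real.cos (x/2)^2 - 1 := by
    have := Real.cos_two_mul (x/2)
    rw [show 2 * (x/2) = x by ring] at this
    linarith
  have h3 : Real.sin (x/2) = (x/2) * sinc (x/2) := sin_eq_sinc _
  have h4 : Real.sin (x/2)^2 = (x/2)^2 * sinc (x/2)^2 := by rw [h3]; ring
  linear_combination h2 + 2*h1 - 2*h4

lemma pow_lim (b : ℕ → ℂ) (L : ℂ) (hb : Tendsto b atTop (nhds L)) :
    Tendsto (fun n : ℕ => (1 + b n / n)^n) atTop (nhds (Complex.exp L)) := by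
  have hn : Tendsto (fun n : ℕ => ((n:ℂ))⁻¹) atTop (nhds 0) :=
    tendsto_inv_atTop_nhds_zero_nat (𝕜 := ℂ)
  have hw : Tendsto (fun n => b n / n) atTop (nhds 0) := by
    have := hb.mul hn
    simpa [div_eq_mul_inv] using this
  set g : ℂ → ℂ := fun w => if w = 0 then 1 else Complex.log (1+w) / w with hgdef
  have hg : Tendsto g (nhds 0) (nhds 1) := by
    rw [← nhdsNE_sup_pure (0:ℂ), tendsto_sup]
    constructor
    · have hd : HasDerivAt Complex.log 1 1 := by
        simpa using Complex.hasDerivAt_log Complex.one_mem_slitPlane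
      rw [hasDerivAt_iff_tendsto_slope] at hd
      have hcomp : Tendsto (fun w : ℂ => 1 + w) (nhdsWithin (0:ℂ) {(0:ℂ)}ᶜ)
          (nhdsWithin (1:ℂ) {(1:ℂ)}ᶜ) := by
        rw [tendsto_nhdsWithin_iff]
        constructor
        · have : Tendsto (fun w : ℂ => 1 + w) (nhds 0) (nhds 1) := by
            simpa using (continuous_add_left (1:ℂ)).tendsto (0:ℂ)
          exact this.mono_left nhdsWithin_le_nhds
        · filter_upwards [self_mem_nhdsWithin] with w (hw : w ≠ 0)
          simpa using hw
      refine (hd.comp hcomp).congr' ?_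
      filter_upwards [self_mem_nhdsWithin] with w (hw : w ≠ 0)
      simp only [Function.comp, slope_def_field, hgdef, Complex.log_one]
      rw [if_neg hw]
      congr 1 <;> ring
    · have : g 0 = 1 := by simp [hgdef]
      simpa [this] using tendsto_pure_nhds g 0
  have hmain : Tendsto (fun n => b n * g (b n / n)) atTop (nhds L) := by
    have := hb.mul (hg.comp hw)
    simpa using this
  have heq : ∀ᶠ n in atTop, Complex.exp (b n * g (b n / n)) = (1 + b n / n)^n := by
    have hsmall : ∀ᶠ n in atTop, ‖b n / (n:ℂ)‖ < 1 := by
      have h := hw.norm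
      rw [norm_zero] at h
      exact h.eventually (gt_mem_nhds one_pos)
    filter_upwards [hsmall, eventually_ge_atTop 1] with n hs hn1
    have hne : (1 : ℂ) + b n / n ≠ 0 := by
      intro h
      have : ‖b n / (n:ℂ)‖ = 1 := by
        have : b n / n = -1 := by linear_combination h
        simp [this]
      linarith
    rcases eq_or_ne (b n) 0 with h0 | h0
    · simp [h0, hgdef]
    · have hnne : ((n:ℂ)) ≠ 0 := by
        exact_mod_cast Nat.cast_ne_zero.mpr (by omega)
      have hwne : b n / n ≠ 0 := div_ne_zero h0 hnne
      rw [hgdef]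
      simp only [if_neg hwne]
      have : b n * (Complex.log (1 + b n / n) / (b n / n)) = n * Complex.log (1 + b n / n) := by
        field_simp
      rw [this, Complex.exp_nat_mul, Complex.exp_log hne]
  exact Tendsto.congr' heq ((Complex.continuous_exp.tendsto L).comp hmain)

def matA (θ₁ θ₂ : ℝ) : Matrix (Fin 2) (Fin 2) ℂ :=
  (-Complex.I) • ((θ₁ : ℂ) • pauliY - (θ₂ : ℂ) • pauliX)

variable (θ₁ θ₂ : ℝ)

lemma matA_eq : matA θ₁ θ₂ = !![0, -(θ₁:ℂ) + θ₂ * Complex.I;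
    (θ₁:ℂ) + θ₂ * Complex.I, 0] := by
  ext i j
  fin_cases i <;> fin_cases j <;>
    simp [matA, pauliX, pauliY] <;> ring_nf <;> simp [Complex.I_sq] <;> ring

lemma matA_sq : matA θ₁ θ₂ ^ 2 = (-((θ₁:ℂ)^2 + (θ₂:ℂ)^2)) • (1 : Matrix (Fin 2) (Fin 2) ℂ) := by
  rw [pow_two, matA_eq]
  ext i j
  fin_cases i <;> fin_cases j <;>
    simp [Matrix.mul_apply, Fin.sum_univ_two, Matrix.one_apply] <;> ring_nf <;>
      simp [Complex.I_sq] <;> ring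

lemma matA_pow_even (k : ℕ) :
    matA θ₁ θ₂ ^ (2 * k) = ((-((θ₁:ℂ)^2 + (θ₂:ℂ)^2)) ^ k) • (1 : Matrix (Fin 2) (Fin 2) ℂ) := by
  rw [pow_mul, matA_sq, smul_pow, one_pow]

lemma matA_pow_odd (k : ℕ) :
    matA θ₁ θ₂ ^ (2 * k + 1) = ((-((θ₁:ℂ)^2 + (θ₂:ℂ)^2)) ^ k) • matA θ₁ θ₂ := by
  rw [pow_succ, matA_pow_even, smul_mul_assoc, one_mul]

lemma sq_sqrt_c : ((Real.sqrt (θ₁^2 + θ₂^2) : ℝ) : ℂ)^2 = (θ₁:ℂ)^2 + (θ₂:ℂ)^2 := by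
  rw [← Complex.ofReal_pow, Real.sq_sqrt (by positivity)]
  push_cast; ring

lemma neg_pow_c (k : ℕ) :
    (-((θ₁:ℂ)^2 + (θ₂:ℂ)^2))^k
      = (-1)^k * ((Real.sqrt (θ₁^2 + θ₂^2) : ℝ) : ℂ)^(2*k) := by
  rw [← sq_sqrt_c θ₁ θ₂, pow_mul, neg_pow]

lemma hasSum_cos_aux :
    HasSum (fun k : ℕ => (((2*k).factorial : ℂ))⁻¹ * (-((θ₁:ℂ)^2 + (θ₂:ℂ)^2))^k)
      ((Real.cos (Real.sqrt (θ₁^2 + θ₂^2)) : ℝ) : ℂ) := by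
  set r := Real.sqrt (θ₁^2 + θ₂^2) with hr
  have h := Complex.hasSum_cos (r : ℂ)
  rw [← Complex.ofReal_cos] at h
  convert h using 1
  funext k
  rw [neg_pow_c θ₁ θ₂ k]
  field_simp
  rfl

lemma hasSum_sinc_aux :
    HasSum (fun k : ℕ => (((2*k+1).factorial : ℂ))⁻¹ * (-((θ₁:ℂ)^2 + (θ₂:ℂ)^2))^k)
      ((sinc (Real.sqrt (θ₁^2 + θ₂^2)) : ℝ) : ℂ) := by
  set r := Real.sqrt (θ₁^2 + θ₂^2) with hr
  rcases eq_or_ne r 0 with h0 | h0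
  · have h1 : θ₁^2 + θ₂^2 = 0 :=
      le_antisymm (Real.sqrt_eq_zero'.mp h0) (by positivity)
    have hθ : (θ₁:ℂ)^2 + (θ₂:ℂ)^2 = 0 := by
      have := congrArg (fun x : ℝ => (x : ℂ)) h1
      push_cast at this
      linear_combination this
    rw [h0, hθ]
    simp only [sinc, if_pos rfl, if_true, Complex.ofReal_one]
    convert hasSum_ite_eq (0 : ℕ) (1 : ℂ) using 1
    funext k
    rcases eq_or_ne k 0 with hk | hk <;> simp [hk, zero_pow]
  · have hs := (Complex.hasSum_sin (r : ℂ)).div_const (r : ℂ)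
    rw [← Complex.ofReal_sin] at hs
    have hrC : (r : ℂ) ≠ 0 := by exact_mod_cast h0
    convert hs using 1
    · rfl
    · funext k
      rw [neg_pow_c θ₁ θ₂ k]
      have h2 : (-1:ℂ)^k * ((r:ℂ))^(2*k+1) / (((2*k+1).factorial : ℕ) : ℂ) / (r:ℂ)
          = ((-1)^k * ((r:ℂ))^(2*k)) * ((((2*k+1).factorial : ℕ) : ℂ)⁻¹ * ((r:ℂ) / (r:ℂ))) := by
        rw [pow_succ]; ring
      rw [h2, div_self hrC, mul_one]
      ring
    · simp [sinc, h0, Complex.ofReal_div]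

lemma matA00 : matA θ₁ θ₂ 0 0 = 0 := by rw [matA_eq]; simp
lemma matA01 : matA θ₁ θ₂ 0 1 = -(θ₁:ℂ) + θ₂ * Complex.I := by rw [matA_eq]; simp
lemma matA10 : matA θ₁ θ₂ 1 0 = (θ₁:ℂ) + θ₂ * Complex.I := by rw [matA_eq]; simp
lemma matA11 : matA θ₁ θ₂ 1 1 = 0 := by rw [matA_eq]; simp

set_option maxHeartbeats 1000000 in
lemma matExp_matA :
    matExp (matA θ₁ θ₂) =
      !![((Real.cos (Real.sqrt (θ₁^2 + θ₂^2)) : ℝ) : ℂ),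
          (-(θ₁:ℂ) + θ₂ * Complex.I) * ((sinc (Real.sqrt (θ₁^2 + θ₂^2)) : ℝ) : ℂ);
         ((θ₁:ℂ) + θ₂ * Complex.I) * ((sinc (Real.sqrt (θ₁^2 + θ₂^2)) : ℝ) : ℂ),
          ((Real.cos (Real.sqrt (θ₁^2 + θ₂^2)) : ℝ) : ℂ)] := by
  set r := Real.sqrt (θ₁^2 + θ₂^2) with hr
  rw [matExp]
  refine HasSum.tsum_eq (Pi.hasSum.mpr fun i => Pi.hasSum.mpr fun j => ?_)
  have hcos := hasSum_cos_aux θ₁ θ₂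
  have hsinc := hasSum_sinc_aux θ₁ θ₂
  set F : Fin 2 → Fin 2 → ℕ → ℂ :=
    fun i j n => (((n.factorial : ℂ))⁻¹ • matA θ₁ θ₂ ^ n) i j with hF
  have key : ∀ i j, HasSum (F i j)
      (!![((Real.cos r : ℝ) : ℂ),
          (-(θ₁:ℂ) + θ₂ * Complex.I) * ((sinc r : ℝ) : ℂ);
         ((θ₁:ℂ) + θ₂ * Complex.I) * ((sinc r : ℝ) : ℂ),
          ((Real.cos r : ℝ) : ℂ)] i j) := by
    intro i j
    fin_cases i <;> fin_cases j
    · -- (0,0)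
      have he : HasSum (fun k : ℕ => F 0 0 (2*k)) ((Real.cos r : ℝ) : ℂ) := by
        simpa [hF, matA_pow_even, Matrix.smul_apply, Matrix.one_apply] using hcos
      have ho : HasSum (fun k : ℕ => F 0 0 (2*k+1)) (0 : ℂ) := by
        simpa [hF, matA_pow_odd, Matrix.smul_apply, matA00] using
          (hasSum_zero : HasSum (fun _ : ℕ => (0:ℂ)) 0)
      simpa using he.even_add_odd ho
    · -- (0,1)
      have he : HasSum (fun k : ℕ => F 0 1 (2*k)) (0 : ℂ) := by
        simpa [hF, matA_pow_even, Matrix.smul_apply, Matrix.one_apply] using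
          (hasSum_zero : HasSum (fun _ : ℕ => (0:ℂ)) 0)
      have ho : HasSum (fun k : ℕ => F 0 1 (2*k+1))
          ((-(θ₁:ℂ) + θ₂ * Complex.I) * ((sinc r : ℝ) : ℂ)) := by
        have h := hsinc.mul_right (-(θ₁:ℂ) + θ₂ * Complex.I)
        simp only [hF, matA_pow_odd, Matrix.smul_apply, matA01, smul_eq_mul]
        convert h using 1
        · rfl
        · funext k; ring
        · ring
      simpa using he.even_add_odd ho
    · -- (1,0)
      have he : HasSum (fun k : ℕ => F 1 0 (2*k)) (0 : ℂ) := by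
        simpa [hF, matA_pow_even, Matrix.smul_apply, Matrix.one_apply] using
          (hasSum_zero : HasSum (fun _ : ℕ => (0:ℂ)) 0)
      have ho : HasSum (fun k : ℕ => F 1 0 (2*k+1))
          (((θ₁:ℂ) + θ₂ * Complex.I) * ((sinc r : ℝ) : ℂ)) := by
        have h := hsinc.mul_right ((θ₁:ℂ) + θ₂ * Complex.I)
        simp only [hF, matA_pow_odd, Matrix.smul_apply, matA10, smul_eq_mul]
        convert h using 1
        · rfl
        · funext k; ring
        · ring
      simpa using he.even_add_odd ho
    · -- (1,1)
      have he : HasSum (fun k : ℕ => F 1 1 (2*k)) ((Real.cos r : ℝ) : ℂ) := by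
        simpa [hF, matA_pow_even, Matrix.smul_apply, Matrix.one_apply] using hcos
      have ho : HasSum (fun k : ℕ => F 1 1 (2*k+1)) (0 : ℂ) := by
        simpa [hF, matA_pow_odd, Matrix.smul_apply, matA11] using
          (hasSum_zero : HasSum (fun _ : ℕ => (0:ℂ)) 0)
      simpa using he.even_add_odd ho
  exact key i j

lemma qubitState_eq : qubitState θ₁ θ₂ =
    ![((Real.cos (Real.sqrt (θ₁^2 + θ₂^2)) : ℝ) : ℂ),
      ((θ₁:ℂ) + θ₂ * Complex.I) * ((sinc (Real.sqrt (θ₁^2 + θ₂^2)) : ℝ) : ℂ)] := by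
  have : qubitState θ₁ θ₂ = matExp (matA θ₁ θ₂) *ᵥ ![1, 0] := rfl
  rw [this, matExp_matA]
  funext i
  fin_cases i <;> simp [Matrix.mulVec, dotProduct, Fin.sum_univ_two]

/-- weak quantum local asymptotic normality for pure qubit states:
the `n`-th power of the overlap of two locally rotated qubit states converges to the
overlap of the corresponding coherent states. -/
theorem weak_qlan_qubit (u₁ v₁ u₂ v₂ : ℝ) :
    Tendsto
      (fun n : ℕ =>
        (star (qubitState (u₁ / Real.sqrt n) (v₁ / Real.sqrt n)) ⬝ᵥ
            qubitState (u₂ / Real.sqrt n) (v₂ / Real.sqrt n)) ^ n)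
      atTop
      (nhds (Complex.exp
        (conj ((u₁ : ℂ) + (v₁ : ℂ) * Complex.I) * ((u₂ : ℂ) + (v₂ : ℂ) * Complex.I) -
          (Complex.normSq ((u₁ : ℂ) + (v₁ : ℂ) * Complex.I) : ℂ) / 2 -
          (Complex.normSq ((u₂ : ℂ) + (v₂ : ℂ) * Complex.I) : ℂ) / 2))) := by
  set z₁ : ℂ := (u₁ : ℂ) + (v₁ : ℂ) * Complex.I with hz₁
  set z₂ : ℂ := (u₂ : ℂ) + (v₂ : ℂ) * Complex.I with hz₂
  set r₁ : ℝ := Real.sqrt (u₁^2 + v₁^2) with hr₁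
  set r₂ : ℝ := Real.sqrt (u₂^2 + v₂^2) with hr₂
  have hr₁sq : r₁^2 = u₁^2 + v₁^2 := Real.sq_sqrt (by positivity)
  have hr₂sq : r₂^2 = u₂^2 + v₂^2 := Real.sq_sqrt (by positivity)
  set L : ℂ := conj z₁ * z₂ - ((r₁^2 : ℝ) : ℂ)/2 - ((r₂^2 : ℝ) : ℂ)/2 with hL
  -- target exponent equals L
  have hLeq : Complex.exp (conj z₁ * z₂ - (Complex.normSq z₁ : ℂ)/2
      - (Complex.normSq z₂ : ℂ)/2) = Complex.exp L := by
    rw [hL]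
    congr 2
    · congr 1
      rw [hz₁, Complex.normSq_add_mul_I, hr₁sq]
    · rw [hz₂, Complex.normSq_add_mul_I, hr₂sq]
  rw [hLeq]
  set b : ℕ → ℂ := fun n =>
    ((-(r₁^2/2) * sinc (r₁ / Real.sqrt n / 2)^2 * Real.cos (r₂ / Real.sqrt n)
      - (r₂^2/2) * sinc (r₂ / Real.sqrt n / 2)^2 : ℝ) : ℂ)
    + conj z₁ * z₂ * ((sinc (r₁ / Real.sqrt n) * sinc (r₂ / Real.sqrt n) : ℝ) : ℂ) with hbdef
  -- limits
  have hsq : Tendsto (fun n : ℕ => Real.sqrt n) atTop atTop := by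
    refine tendsto_atTop_atTop.mpr fun c => ⟨⌈c^2⌉₊, fun n hn => ?_⟩
    rcases le_or_gt c 0 with hc | hc
    · exact hc.trans (Real.sqrt_nonneg _)
    · rw [show c = Real.sqrt (c^2) by rw [Real.sqrt_sq hc.le]]
      exact Real.sqrt_le_sqrt ((Nat.le_ceil _).trans (by exact_mod_cast hn))
  have hdiv : ∀ c : ℝ, Tendsto (fun n : ℕ => c / Real.sqrt n) atTop (nhds 0) :=
    fun c => Tendsto.div_atTop tendsto_const_nhds hsq
  have hsinc : ∀ c : ℝ, Tendsto (fun n : ℕ => sinc (c / Real.sqrt n)) atTop (nhds 1) :=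
    fun c => tendsto_sinc.comp (hdiv c)
  have hsinch : ∀ c : ℝ, Tendsto (fun n : ℕ => sinc (c / Real.sqrt n / 2)) atTop (nhds 1) := by
    intro c
    have h2 : Tendsto (fun n : ℕ => c / Real.sqrt n / 2) atTop (nhds 0) := by
      have := (hdiv c).div_const 2
      simpa using this
    exact tendsto_sinc.comp h2
  have hcosl : Tendsto (fun n : ℕ => Real.cos (r₂ / Real.sqrt n)) atTop (nhds 1) := by
    have := (Real.continuous_cos.tendsto 0).comp (hdiv r₂)
    simpa [Function.comp_def] using this
  have hb : Tendsto b atTop (nhds L) := by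
    have h1 : Tendsto (fun n : ℕ =>
        -(r₁^2/2) * sinc (r₁ / Real.sqrt n / 2)^2 * Real.cos (r₂ / Real.sqrt n)
          - (r₂^2/2) * sinc (r₂ / Real.sqrt n / 2)^2) atTop
        (nhds (-(r₁^2/2) * 1^2 * 1 - (r₂^2/2) * 1^2)) := by
      exact ((tendsto_const_nhds.mul ((hsinch r₁).pow 2)).mul hcosl).sub
        (tendsto_const_nhds.mul ((hsinch r₂).pow 2))
    have h2 : Tendsto (fun n : ℕ =>
        ((sinc (r₁ / Real.sqrt n) * sinc (r₂ / Real.sqrt n) : ℝ) : ℂ)) atTop (nhds 1) := by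
      have h := ((hsinc r₁).mul (hsinc r₂))
      have h' := (Complex.continuous_ofReal.tendsto _).comp h
      simpa [Function.comp_def] using h'
    have h3 := ((Complex.continuous_ofReal.tendsto _).comp h1).add ((tendsto_const_nhds (x := (starRingEnd ℂ) z₁ * z₂)).mul h2)
    rw [hbdef]
    convert h3 using 2
    · rfl
    rw [hL]
    push_cast
    ring
  have hpow := pow_lim b L hb
  refine hpow.congr' ?_
  filter_upwards [eventually_ge_atTop 1] with n hn
  have hn0 : 0 < (n : ℝ) := by exact_mod_cast hn
  set s : ℝ := Real.sqrt n with hs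
  have hs0 : 0 < s := Real.sqrt_pos.mpr hn0
  have hs2 : s^2 = (n : ℝ) := Real.sq_sqrt hn0.le
  have hnC : ((n : ℕ) : ℂ) ≠ 0 := by
    exact_mod_cast Nat.cast_ne_zero.mpr (by omega)
  -- the radii
  have hρ₁ : Real.sqrt ((u₁/s)^2 + (v₁/s)^2) = r₁ / s := by
    rw [show (u₁/s)^2 + (v₁/s)^2 = (u₁^2 + v₁^2) / s^2 by ring,
      Real.sqrt_div (by positivity), Real.sqrt_sq hs0.le, hr₁]
  have hρ₂ : Real.sqrt ((u₂/s)^2 + (v₂/s)^2) = r₂ / s := by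
    rw [show (u₂/s)^2 + (v₂/s)^2 = (u₂^2 + v₂^2) / s^2 by ring,
      Real.sqrt_div (by positivity), Real.sqrt_sq hs0.le, hr₂]
  have hsC : ((s : ℝ) : ℂ) ≠ 0 := by exact_mod_cast hs0.ne'
  have hs2C : ((s : ℝ) : ℂ)^2 = ((n : ℕ) : ℂ) := by
    exact_mod_cast congrArg (fun x : ℝ => (x : ℂ)) hs2
  simp only [hbdef]
  rw [← hs]
  rw [qubitState_eq, qubitState_eq, hρ₁, hρ₂]
  congr 1
  -- abbreviations
  have e1 := cos_sub_one (r₁ / s)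
  have e2 := cos_sub_one (r₂ / s)
  have hs2ne : s^2 ≠ 0 := pow_ne_zero 2 hs0.ne'
  have e1' : s^2 * (Real.cos (r₁ / s) - 1) = -(r₁^2/2) * sinc (r₁ / s / 2)^2 := by
    rw [e1, div_pow]
    rw [show s^2 * (-(r₁^2 / s^2 / 2) * sinc (r₁ / s / 2)^2)
        = -(r₁^2 * (s^2 / s^2) / 2) * sinc (r₁ / s / 2)^2 from by ring,
      div_self hs2ne]
    ring
  have e2' : s^2 * (Real.cos (r₂ / s) - 1) = -(r₂^2/2) * sinc (r₂ / s / 2)^2 := by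
    rw [e2, div_pow]
    rw [show s^2 * (-(r₂^2 / s^2 / 2) * sinc (r₂ / s / 2)^2)
        = -(r₂^2 * (s^2 / s^2) / 2) * sinc (r₂ / s / 2)^2 from by ring,
      div_self hs2ne]
    ring
  have hKr : -(r₁^2/2) * sinc (r₁ / s / 2)^2 * Real.cos (r₂ / s)
      - (r₂^2/2) * sinc (r₂ / s / 2)^2
      = (n : ℝ) * (Real.cos (r₁ / s) * Real.cos (r₂ / s) - 1) := by
    rw [← hs2]
    linear_combination -(Real.cos (r₂ / s)) * e1' - e2'
  have hKC : ((-(r₁^2/2) * sinc (r₁ / s / 2)^2 * Real.cos (r₂ / s)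
      - (r₂^2/2) * sinc (r₂ / s / 2)^2 : ℝ) : ℂ)
      = ((n : ℕ) : ℂ) * (((Real.cos (r₁ / s) : ℝ) : ℂ) * ((Real.cos (r₂ / s) : ℝ) : ℂ) - 1) := by
    rw [hKr]
    push_cast
    ring
  have hKCn : ((-(r₁^2/2) * sinc (r₁ / s / 2)^2 * Real.cos (r₂ / s)
      - (r₂^2/2) * sinc (r₂ / s / 2)^2 : ℝ) : ℂ) / ((n : ℕ) : ℂ)
      = ((Real.cos (r₁ / s) : ℝ) : ℂ) * ((Real.cos (r₂ / s) : ℝ) : ℂ) - 1 := by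
    rw [hKC]
    exact mul_div_cancel_left₀ _ hnC
  have hww : conj (((u₁/s : ℝ) : ℂ) + ((v₁/s : ℝ) : ℂ) * Complex.I)
      * ((((u₂/s : ℝ)) : ℂ) + ((v₂/s : ℝ) : ℂ) * Complex.I)
      = conj z₁ * z₂ / ((n : ℕ) : ℂ) := by
    rw [hz₁, hz₂]
    simp only [map_add, _root_.map_mul, Complex.conj_ofReal, Complex.conj_I]
    push_cast
    rw [← hs2C]
    ring
  -- expand the dot product
  simp only [dotProduct, Fin.sum_univ_two, Pi.star_apply, Matrix.cons_val_zero,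
    Matrix.cons_val_one, Matrix.head_cons, RCLike.star_def, _root_.map_mul, Complex.conj_ofReal,
    Complex.ofReal_mul]
  linear_combination hKCn - (((sinc (r₁ / s) : ℝ) : ℂ) * ((sinc (r₂ / s) : ℝ) : ℂ)) * hww


end QMCPaper
end
end
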